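/- Let F be an inner product distribution on ℝ^d whose second moment matrix Δ = E[Y Y^⊤] (Y ∼ F) has rank d, and let X_1,…,X_n be i.i.d. F, collected as the rows of X ∈ ℝ^{n×d}. Then with probability at least 1 − 2d²/n², for every 1 ≤ i ≤ d, | λ_i(X X^⊤) − n λ_i(Δ) | ≤ 2d √(n log n); in particular, λ_i(X X^⊤) = Ω(n λ_i(Δ)) almost surely, and the d nonzero eigenvalues of P = X X^⊤ grow at least linearly in n. -/

import Mathlib

open MeasureTheory ProbabilityTheory Filter Matrix

noncomputable section

section
open scoped ComplexOrder

/-- The positive semidefinite square root of a positive semidefinite matrix, as defined in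
the older Mathlib (removed since). -/
def Matrix.PosSemidef.sqrt {n : Type} [Fintype n] [DecidableEq n] {𝕜 : Type} [RCLike 𝕜]
    {A : Matrix n n 𝕜} (hA : A.PosSemidef) : Matrix n n 𝕜 :=
  hA.1.eigenvectorUnitary.1 * diagonal ((↑) ∘ (√·) ∘ hA.1.eigenvalues) *
  (star hA.1.eigenvectorUnitary : Matrix n n 𝕜)

lemma Matrix.PosSemidef.posSemidef_sqrt {n : Type} [Fintype n] [DecidableEq n] {𝕜 : Type}
    [RCLike 𝕜] {A : Matrix n n 𝕜} (hA : A.PosSemidef) : PosSemidef hA.sqrt := by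
  apply PosSemidef.mul_mul_conjTranspose_same
  refine posSemidef_diagonal_iff.mpr fun i ↦ ?_
  rw [Function.comp_apply, RCLike.nonneg_iff]
  constructor
  · simp only [RCLike.ofReal_re]
    exact Real.sqrt_nonneg _
  · simp only [RCLike.ofReal_im]

end

namespace RDPG

/-- Euclidean norm of a vector in `ℝ^d`. -/
def rnorm {d : ℕ} (v : Fin d → ℝ) : ℝ := Real.sqrt (∑ i, v i ^ 2)

/-- Frobenius norm of a matrix. -/
def frob {ι κ : Type} [Fintype ι] [Fintype κ] (H : Matrix ι κ ℝ) : ℝ :=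
  Real.sqrt (∑ i, ∑ j, H i j ^ 2)

/-- `2 → ∞` norm: the maximum Euclidean norm of the rows. -/
def twoInf {ι : Type} [Fintype ι] {d : ℕ} (H : Matrix ι (Fin d) ℝ) : ℝ :=
  ⨆ i, rnorm (H i)

/-- `|H| = (HᵀH)^{1/2}`, the matrix absolute value. -/
def matAbs {ι : Type} [Fintype ι] [DecidableEq ι] (H : Matrix ι ι ℝ) : Matrix ι ι ℝ :=
  (Matrix.posSemidef_conjTranspose_mul_self H).sqrt

lemma matAbs_posSemidef {ι : Type} [Fintype ι] [DecidableEq ι] (H : Matrix ι ι ℝ) :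
    (matAbs H).PosSemidef :=
  (Matrix.posSemidef_conjTranspose_mul_self H).posSemidef_sqrt

/-- The `k`-th largest (1-indexed) singular value of a square matrix `H`, i.e. the
`k`-th largest eigenvalue of `|H|`; junk value `0` when out of range.  For a positive
semidefinite matrix this is also the `k`-th largest eigenvalue. -/
def sval {n : ℕ} (H : Matrix (Fin n) (Fin n) ℝ) (k : ℕ) : ℝ :=
  if h : k - 1 < n then
    (matAbs_posSemidef H).1.eigenvalues
      (Tuple.sort (fun j => - (matAbs_posSemidef H).1.eigenvalues j) ⟨k - 1, h⟩)
  else 0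

/-- Spectral norm (largest singular value) of a rectangular matrix. -/
def spec {m n : ℕ} (H : Matrix (Fin m) (Fin n) ℝ) : ℝ := Real.sqrt (sval (Hᵀ * H) 1)

/-- `δ(H)`: the maximum row sum. -/
def deltaMax {n : ℕ} (H : Matrix (Fin n) (Fin n) ℝ) : ℝ := ⨆ i, ∑ j, H i j

/-- `γ(H) = (σ_d(H) - σ_{d+1}(H))/δ(H)`. -/
def gammaGap {n : ℕ} (d : ℕ) (H : Matrix (Fin n) (Fin n) ℝ) : ℝ :=
  (sval H d - sval H (d + 1)) / deltaMax H

/-- Orthogonal matrix predicate. -/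
def IsOrth {d : ℕ} (W : Matrix (Fin d) (Fin d) ℝ) : Prop := Wᵀ * W = 1

/-- Entrywise square root, used for `S^{1/2}` of a diagonal matrix `S`. -/
def diagSqrt {d : ℕ} (S : Matrix (Fin d) (Fin d) ℝ) : Matrix (Fin d) (Fin d) ℝ :=
  Matrix.of fun i j => Real.sqrt (S i j)

/-- `S^{-1/2}` for a diagonal matrix `S`. -/
def diagInvSqrt {d : ℕ} (S : Matrix (Fin d) (Fin d) ℝ) : Matrix (Fin d) (Fin d) ℝ :=
  Matrix.of fun i j => if i = j then (Real.sqrt (S i i))⁻¹ else 0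

/-- `(U, S)` is a top-`d` spectral pair for the symmetric matrix `M`:
`S` is diagonal with nonnegative nonincreasing diagonal entries which are the `d`
largest eigenvalues of `|M|`, and the columns of `U` are corresponding orthonormal
eigenvectors of `|M|`. -/
structure SpecPair {ι : Type} [Fintype ι] [DecidableEq ι] {d : ℕ} (M : Matrix ι ι ℝ)
    (U : Matrix ι (Fin d) ℝ) (S : Matrix (Fin d) (Fin d) ℝ) : Prop where
  diag : ∀ i j, i ≠ j → S i j = 0
  nonneg : ∀ i, 0 ≤ S i i
  anti : ∀ i j : Fin d, i ≤ j → S j j ≤ S i i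
  orth : Uᵀ * U = 1
  eig : matAbs M * U = U * S
  top : ∀ (v : ι → ℝ) (t : ℝ), v ≠ 0 → matAbs M *ᵥ v = t • v → Uᵀ *ᵥ v = 0 →
    ∀ i, t ≤ S i i

/-- The adjacency spectral embedding associated to a top-`d` spectral pair. -/
def ase {ι : Type} [Fintype ι] {d : ℕ} (U : Matrix ι (Fin d) ℝ)
    (S : Matrix (Fin d) (Fin d) ℝ) : Matrix ι (Fin d) ℝ :=
  U * diagSqrt S

/-- The normalized Laplacian `L(A) = D^{-1/2} A D^{-1/2}`, `D_{ii} = ∑_{j ≠ i} A_{ij}`. -/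
def lap {n : ℕ} (A : Matrix (Fin n) (Fin n) ℝ) : Matrix (Fin n) (Fin n) ℝ :=
  Matrix.of fun i j =>
    A i j / (Real.sqrt (∑ k ∈ Finset.univ.erase i, A i k) *
      Real.sqrt (∑ k ∈ Finset.univ.erase j, A j k))

/-- `A` is (the adjacency matrix of) a random dot product graph with **fixed** latent
position matrix `X`: `A` is symmetric, hollow, `{0,1}`-valued, with the entries
`A_{ij}`, `i < j`, independent Bernoulli `⟨X_i, X_j⟩` random variables (the last two
conditions being encoded through the product formula over finite families of edges). -/
def IsRDPGf {Ω : Type} [MeasurableSpace Ω] (μ : Measure Ω) {n d : ℕ}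
    (X : Matrix (Fin n) (Fin d) ℝ) (A : Ω → Matrix (Fin n) (Fin n) ℝ) : Prop :=
  (∀ i j : Fin n, X i ⬝ᵥ X j ∈ Set.Icc (0:ℝ) 1) ∧
  (∀ ω, (A ω)ᵀ = A ω) ∧
  (∀ ω i, A ω i i = 0) ∧
  (∀ ω i j, A ω i j = 0 ∨ A ω i j = 1) ∧
  (∀ i j, Measurable fun ω => A ω i j) ∧
  (∀ E : Finset (Fin n × Fin n), (∀ p ∈ E, p.1 < p.2) →
    μ {ω | ∀ p ∈ E, A ω p.1 p.2 = 1} = ENNReal.ofReal (∏ p ∈ E, X p.1 ⬝ᵥ X p.2))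

/-- `(A, X)` is a random dot product graph with i.i.d. latent positions distributed as
`F`: the rows of `X` are i.i.d. with law `F` and, conditional on `X`, `A` is symmetric,
hollow, `{0,1}`-valued with independent Bernoulli `⟨X_i, X_j⟩` edges (encoded via the
product formula over finite edge families and measurable rectangles in `X`). -/
def IsRDPGrand {Ω : Type} [MeasurableSpace Ω] (μ : Measure Ω) {n d : ℕ}
    (F : Measure (Fin d → ℝ)) (X : Ω → Matrix (Fin n) (Fin d) ℝ)
    (A : Ω → Matrix (Fin n) (Fin n) ℝ) : Prop :=
  (∀ i, Measurable fun ω => X ω i) ∧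
  (∀ S : Fin n → Set (Fin d → ℝ), (∀ i, MeasurableSet (S i)) →
    μ {ω | ∀ i, X ω i ∈ S i} = ∏ i, F (S i)) ∧
  (∀ ω, (A ω)ᵀ = A ω) ∧
  (∀ ω i, A ω i i = 0) ∧
  (∀ ω i j, A ω i j = 0 ∨ A ω i j = 1) ∧
  (∀ i j, Measurable fun ω => A ω i j) ∧
  (∀ E : Finset (Fin n × Fin n), (∀ p ∈ E, p.1 < p.2) →
    ∀ S : Fin n → Set (Fin d → ℝ), (∀ i, MeasurableSet (S i)) →
      μ ({ω | ∀ p ∈ E, A ω p.1 p.2 = 1} ∩ {ω | ∀ i, X ω i ∈ S i}) =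
        ENNReal.ofReal (∫ ω in {ω | ∀ i, X ω i ∈ S i},
          (∏ p ∈ E, X ω p.1 ⬝ᵥ X ω p.2) ∂μ))

/-- `F` is a `d`-dimensional inner product distribution with support (contained in) `s`:
`F` is a probability measure giving full mass to `s`, and `x ⬝ᵥ y ∈ [0,1]` for all
`x, y ∈ s`. -/
def InnerProdDist {d : ℕ} (F : Measure (Fin d → ℝ)) (s : Set (Fin d → ℝ)) : Prop :=
  IsProbabilityMeasure F ∧ F sᶜ = 0 ∧ ∀ x ∈ s, ∀ y ∈ s, x ⬝ᵥ y ∈ Set.Icc (0:ℝ) 1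

/-- Second moment matrix `Δ = E[X₁ X₁ᵀ]` of a distribution `F` on `ℝ^d`. -/
def smm {d : ℕ} (F : Measure (Fin d → ℝ)) : Matrix (Fin d) (Fin d) ℝ :=
  Matrix.of fun a b => ∫ x, x a * x b ∂F

/-- Mean vector `μ = E[X₁]` of a distribution `F` on `ℝ^d`. -/
def meanVec {d : ℕ} (F : Measure (Fin d → ℝ)) : Fin d → ℝ := fun a => ∫ x, x a ∂F

/-- `Φ(z, Σ)`: the cdf at `z` of the centered `d`-dimensional Gaussian with
covariance matrix `Σ` (defined via its Lebesgue density). -/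
def gaussCDF {d : ℕ} (Sg : Matrix (Fin d) (Fin d) ℝ) (z : Fin d → ℝ) : ℝ :=
  ∫ x in {x : Fin d → ℝ | ∀ i, x i ≤ z i},
    (Real.sqrt ((2 * Real.pi) ^ d * Sg.det))⁻¹ * Real.exp (-(x ⬝ᵥ (Sg⁻¹ *ᵥ x)) / 2)

/-- The covariance `Σ(x) = Δ⁻¹ E[(xᵀX₁ - (xᵀX₁)²) X₁X₁ᵀ] Δ⁻¹` appearing in the
central limit theorem for the adjacency spectral embedding. -/
def aseCov {d : ℕ} (F : Measure (Fin d → ℝ)) (x : Fin d → ℝ) :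
    Matrix (Fin d) (Fin d) ℝ :=
  (smm F)⁻¹ * (Matrix.of fun a b => ∫ y, (x ⬝ᵥ y - (x ⬝ᵥ y) ^ 2) * (y a * y b) ∂F) *
    (smm F)⁻¹

/-- `Δ̃ = E[X₁X₁ᵀ/(X₁ᵀμ)]` appearing in the Laplacian spectral embedding CLT. -/
def lseDelta {d : ℕ} (F : Measure (Fin d → ℝ)) : Matrix (Fin d) (Fin d) ℝ :=
  Matrix.of fun a b => ∫ y, (y a * y b) / (y ⬝ᵥ meanVec F) ∂F

/-- The covariance `Σ̃(x)` appearing in the Laplacian spectral embedding CLT. -/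
def lseCov {d : ℕ} (F : Measure (Fin d → ℝ)) (x : Fin d → ℝ) :
    Matrix (Fin d) (Fin d) ℝ :=
  Matrix.of fun a b => ∫ y,
    (((lseDelta F)⁻¹ *ᵥ y) a / (y ⬝ᵥ meanVec F) - x a / (2 * (x ⬝ᵥ meanVec F))) *
      ((((lseDelta F)⁻¹ *ᵥ y) b / (y ⬝ᵥ meanVec F) - x b / (2 * (x ⬝ᵥ meanVec F))) *
        ((x ⬝ᵥ y - (x ⬝ᵥ y) ^ 2) / (x ⬝ᵥ meanVec F))) ∂F



section aux

open Real


section cosh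

lemma my_sinh_le (x : ℝ) (hx : 0 ≤ x) : Real.sinh x ≤ x * Real.cosh x := by
  have h : ∀ y : ℝ, HasDerivAt (fun t => t * Real.cosh t - Real.sinh t) (y * Real.sinh y) y := by
    intro y
    have h1 : HasDerivAt (fun t : ℝ => t * Real.cosh t) (1 * Real.cosh y + y * Real.sinh y) y :=
      (hasDerivAt_id y).mul (Real.hasDerivAt_cosh y)
    have := h1.sub (Real.hasDerivAt_sinh y)
    rw [show (y * Real.sinh y) = 1 * Real.cosh y + y * Real.sinh y - Real.cosh y by ring]; exact this
  have hmono : MonotoneOn (fun t => t * Real.cosh t - Real.sinh t) (Set.Ici 0) := by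
    apply monotoneOn_of_deriv_nonneg (convex_Ici 0)
    · exact ((continuous_id.mul Real.continuous_cosh).sub Real.continuous_sinh).continuousOn
    · intro y hy
      exact ((h y).differentiableAt).differentiableWithinAt
    · intro y hy
      rw [(h y).deriv]
      rw [interior_Ici] at hy
      exact mul_nonneg (le_of_lt hy) ((Real.sinh_nonneg_iff.2 (le_of_lt hy)))
  have := hmono (Set.self_mem_Ici) (Set.mem_Ici.2 hx) hx
  simp only [Real.sinh_zero, Real.cosh_zero, mul_one, zero_mul, sub_zero, zero_sub, neg_zero] at this
  linarith

lemma my_cosh_le (x : ℝ) : Real.cosh x ≤ Real.exp (x ^ 2 / 2) := by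
  -- reduce to x ≥ 0
  wlog hx : 0 ≤ x with H
  · have := H (-x) (by linarith [le_of_not_ge hx])
    simpa [Real.cosh_neg] using this
  have h : ∀ y : ℝ, HasDerivAt (fun t => t ^ 2 / 2 - Real.log (Real.cosh t))
      (y - Real.sinh y / Real.cosh y) y := by
    intro y
    have h1 : HasDerivAt (fun t : ℝ => t ^ 2 / 2) y y := by
      have := (hasDerivAt_pow 2 y).div_const 2
      simpa using this
    have h2 : HasDerivAt (fun t : ℝ => Real.log (Real.cosh t)) (Real.sinh y / Real.cosh y) y := by
      have := (Real.hasDerivAt_cosh y).log (ne_of_gt (Real.cosh_pos _))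
      simpa using this
    exact h1.sub h2
  have hmono : MonotoneOn (fun t => t ^ 2 / 2 - Real.log (Real.cosh t)) (Set.Ici 0) := by
    apply monotoneOn_of_deriv_nonneg (convex_Ici 0)
    · exact ((continuous_pow 2).div_const 2).continuousOn.sub
        ((Real.continuous_cosh.log (fun t => ne_of_gt (Real.cosh_pos _))).continuousOn)
    · intro y hy; exact ((h y).differentiableAt).differentiableWithinAt
    · intro y hy
      rw [(h y).deriv]
      rw [interior_Ici] at hy
      rw [sub_nonneg, div_le_iff₀ (Real.cosh_pos _)]
      exact my_sinh_le y (le_of_lt hy)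
  have := hmono (Set.self_mem_Ici) (Set.mem_Ici.2 hx) hx
  simp only [Real.cosh_zero, Real.log_one] at this
  have hlog : Real.log (Real.cosh x) ≤ x ^ 2 / 2 := by
    norm_num at this; linarith
  calc Real.cosh x = Real.exp (Real.log (Real.cosh x)) := (Real.exp_log (Real.cosh_pos _)).symm
    _ ≤ Real.exp (x ^ 2 / 2) := Real.exp_le_exp.2 hlog

lemma exp_mul_le_cosh {w : ℝ} (hw : |w| ≤ 1) (t : ℝ) :
    Real.exp (t * w) ≤ Real.cosh t + w * Real.sinh t := by
  obtain ⟨h1, h2⟩ := abs_le.1 hw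
  have hc := convexOn_exp.2 (Set.mem_univ (-t)) (Set.mem_univ t)
    (by linarith : (0:ℝ) ≤ (1 - w) / 2) (by linarith : (0:ℝ) ≤ (1 + w) / 2) (by ring)
  simp only [smul_eq_mul] at hc
  have harg : (1 - w) / 2 * (-t) + (1 + w) / 2 * t = t * w := by ring
  rw [harg] at hc
  calc Real.exp (t * w) ≤ (1 - w) / 2 * Real.exp (-t) + (1 + w) / 2 * Real.exp t := hc
    _ = Real.cosh t + w * Real.sinh t := by rw [Real.cosh_eq, Real.sinh_eq]; ring

end cosh

section hoeffding

variable {Ω : Type} [MeasurableSpace Ω] (μ : Measure Ω) [IsProbabilityMeasure μ]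

lemma integrable_of_bound (Z : Ω → ℝ) (hm : AEStronglyMeasurable Z μ) (C : ℝ)
    (hb : ∀ᵐ ω ∂μ, |Z ω| ≤ C) : Integrable Z μ :=
  Integrable.mono' (integrable_const C) hm (by simpa [Real.norm_eq_abs] using hb)

lemma mgf_sub_mean_le (Z : Ω → ℝ) (hm : Measurable Z) (c : ℝ)
    (hb : ∀ᵐ ω ∂μ, Z ω ∈ Set.Icc c (c + 1)) (t : ℝ) :
    mgf (fun ω => Z ω - μ[Z]) μ t ≤ Real.exp (t ^ 2 / 2) := by
  have hZint : Integrable Z μ := integrable_of_bound μ Z hm.aestronglyMeasurable (|c| + 1)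
    (by filter_upwards [hb] with ω h; rw [abs_le]; constructor <;>
        [nlinarith [h.1, h.2, abs_nonneg c, le_abs_self c, neg_abs_le c];
         nlinarith [h.1, h.2, le_abs_self c]])
  set m := μ[Z] with hmdef
  have hml : c ≤ m := by
    have := integral_mono_ae (integrable_const c) hZint (by filter_upwards [hb] with ω h using h.1)
    simpa using this
  have hmu : m ≤ c + 1 := by
    have := integral_mono_ae hZint (integrable_const (c+1))
      (by filter_upwards [hb] with ω h using h.2)
    simpa using this
  have hY : ∀ᵐ ω ∂μ, |Z ω - m| ≤ 1 := by
    filter_upwards [hb] with ω h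
    rw [abs_le]; constructor <;> [linarith [h.1]; linarith [h.2]]
  have hYint : Integrable (fun ω => Z ω - m) μ := hZint.sub (integrable_const m)
  have hEY : μ[fun ω => Z ω - m] = 0 := by
    rw [integral_sub hZint (integrable_const m), integral_const]
    simp [hmdef]
  have hpt : ∀ᵐ ω ∂μ, Real.exp (t * (Z ω - m)) ≤ Real.cosh t + (Z ω - m) * Real.sinh t := by
    filter_upwards [hY] with ω h using exp_mul_le_cosh h t
  have hint1 : Integrable (fun ω => Real.exp (t * (Z ω - m))) μ := by
    apply integrable_of_bound μ _ (((hm.sub measurable_const).const_mul t).exp).aestronglyMeasurable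
      (Real.exp |t|)
    filter_upwards [hY] with ω h
    rw [abs_of_pos (Real.exp_pos _), Real.exp_le_exp]
    calc t * (Z ω - m) ≤ |t * (Z ω - m)| := le_abs_self _
      _ = |t| * |Z ω - m| := abs_mul _ _
      _ ≤ |t| * 1 := by gcongr
      _ = |t| := mul_one _
  have hint2 : Integrable (fun ω => Real.cosh t + (Z ω - m) * Real.sinh t) μ :=
    (integrable_const _).add (hYint.mul_const _)
  calc mgf (fun ω => Z ω - m) μ t = ∫ ω, Real.exp (t * (Z ω - m)) ∂μ := rfl
    _ ≤ ∫ ω, (Real.cosh t + (Z ω - m) * Real.sinh t) ∂μ := integral_mono_ae hint1 hint2 hpt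
    _ = Real.cosh t + (μ[fun ω => Z ω - m]) * Real.sinh t := by
        rw [integral_add (integrable_const _) (hYint.mul_const _), integral_const,
          integral_mul_const]
        simp
    _ = Real.cosh t := by rw [hEY]; ring
    _ ≤ Real.exp (t ^ 2 / 2) := my_cosh_le t

lemma hoeffding_tail {n : ℕ} (Z : Fin n → Ω → ℝ) (hm : ∀ i, Measurable (Z i))
    (hind : iIndepFun Z μ) (c : Fin n → ℝ)
    (hb : ∀ i, ∀ᵐ ω ∂μ, Z i ω ∈ Set.Icc (c i) (c i + 1)) (u : ℝ) (hu : 0 ≤ u) :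
    μ {ω | u ≤ ∑ i, (Z i ω - μ[Z i])} ≤ ENNReal.ofReal (Real.exp (-u ^ 2 / (2 * n))) := by
  rcases Nat.eq_zero_or_pos n with hn | hn
  · subst hn
    simp only [Nat.cast_zero, mul_zero, div_zero, Real.exp_zero, ENNReal.ofReal_one]
    exact le_trans (measure_mono (Set.subset_univ _)) (by simp)
  set t : ℝ := u / n with ht
  have htn : 0 ≤ t := div_nonneg hu (Nat.cast_nonneg n)
  set Y : Fin n → Ω → ℝ := fun i ω => Z i ω - μ[Z i] with hYdef
  have hYm : ∀ i, Measurable (Y i) := fun i => (hm i).sub measurable_const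
  have hYind : iIndepFun Y μ := by
    have := hind.comp (fun i x => x - μ[Z i]) (fun i => measurable_id.sub measurable_const)
    exact this
  have hYb : ∀ i, ∀ᵐ ω ∂μ, |Y i ω| ≤ 1 := by
    intro i
    have hZint : Integrable (Z i) μ := integrable_of_bound μ (Z i)
      (hm i).aestronglyMeasurable (|c i| + 1)
      (by filter_upwards [hb i] with ω h; rw [abs_le]; constructor <;>
          [nlinarith [h.1, h.2, abs_nonneg (c i), le_abs_self (c i), neg_abs_le (c i)];
           nlinarith [h.1, h.2, le_abs_self (c i)]])
    have hml : c i ≤ μ[Z i] := by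
      have := integral_mono_ae (integrable_const (c i)) hZint
        (by filter_upwards [hb i] with ω h using h.1)
      simpa using this
    have hmu : μ[Z i] ≤ c i + 1 := by
      have := integral_mono_ae hZint (integrable_const (c i + 1))
        (by filter_upwards [hb i] with ω h using h.2)
      simpa using this
    filter_upwards [hb i] with ω h
    have hYv : Y i ω = Z i ω - μ[Z i] := rfl
    rw [hYv, abs_le]
    exact ⟨by linarith [h.1], by linarith [h.2]⟩
  have hSm : Measurable (∑ i, Y i) := by
    have := Finset.measurable_sum Finset.univ (fun (i : Fin n) _ => hYm i)
    simpa [Finset.sum_fn] using this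
  have hint : Integrable (fun ω => Real.exp (t * (∑ i, Y i) ω)) μ := by
    apply integrable_of_bound μ _ ((hSm.const_mul t).exp).aestronglyMeasurable
      (Real.exp (|t| * n))
    have hball : ∀ᵐ ω ∂μ, ∀ i, |Y i ω| ≤ 1 := ae_all_iff.2 hYb
    filter_upwards [hball] with ω h
    rw [abs_of_pos (Real.exp_pos _), Real.exp_le_exp]
    calc t * (∑ i, Y i) ω ≤ |t * (∑ i, Y i) ω| := le_abs_self _
      _ = |t| * |∑ i, Y i ω| := by rw [abs_mul, Finset.sum_apply]
      _ ≤ |t| * (∑ i : Fin n, |Y i ω|) := by gcongr; exact Finset.abs_sum_le_sum_abs _ _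
      _ ≤ |t| * (∑ _i : Fin n, (1:ℝ)) := by gcongr with i hi; exact h i
      _ = |t| * n := by simp
  have hchern := measure_ge_le_exp_mul_mgf (X := ∑ i, Y i) (μ := μ) u htn hint
  have hmgf : mgf (∑ i, Y i) μ t ≤ Real.exp (n * (t ^ 2 / 2)) := by
    rw [hYind.mgf_sum hYm Finset.univ]
    calc ∏ i : Fin n, mgf (Y i) μ t ≤ ∏ _i : Fin n, Real.exp (t ^ 2 / 2) := by
          apply Finset.prod_le_prod (fun i _ => mgf_nonneg)
          intro i _
          exact mgf_sub_mean_le μ (Z i) (hm i) (c i) (hb i) t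
      _ = Real.exp (n * (t ^ 2 / 2)) := by
          rw [Finset.prod_const, ← Real.exp_nat_mul]; simp
  have hbound : (μ {ω | u ≤ (∑ i, Y i) ω}).toReal ≤ Real.exp (-u ^ 2 / (2 * n)) := by
    calc (μ {ω | u ≤ (∑ i, Y i) ω}).toReal ≤ Real.exp (-t * u) * mgf (∑ i, Y i) μ t := hchern
      _ ≤ Real.exp (-t * u) * Real.exp (n * (t ^ 2 / 2)) := by
          have := Real.exp_pos (-t * u)
          nlinarith [hmgf, mgf_nonneg (X := ∑ i, Y i) (μ := μ) (t := t)]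
      _ = Real.exp (-t * u + n * (t ^ 2 / 2)) := (Real.exp_add _ _).symm
      _ = Real.exp (-u ^ 2 / (2 * n)) := by
          congr 1
          rw [ht]
          have hn' : (n:ℝ) ≠ 0 := Nat.cast_ne_zero.2 hn.ne'
          field_simp
          ring
  have hset : {ω | u ≤ ∑ i, (Z i ω - μ[Z i])} = {ω | u ≤ (∑ i, Y i) ω} := by
    ext ω; simp [hYdef, Finset.sum_apply]
  rw [hset]
  rw [← ENNReal.ofReal_toReal (measure_ne_top μ _)]
  exact ENNReal.ofReal_le_ofReal hbound

lemma hoeffding_two_sided {n : ℕ} (Z : Fin n → Ω → ℝ) (hm : ∀ i, Measurable (Z i))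
    (hind : iIndepFun Z μ) (c : Fin n → ℝ)
    (hb : ∀ i, ∀ᵐ ω ∂μ, Z i ω ∈ Set.Icc (c i) (c i + 1)) (u : ℝ) (hu : 0 ≤ u) :
    μ {ω | u < |∑ i, Z i ω - ∑ i, μ[Z i]|} ≤
      2 * ENNReal.ofReal (Real.exp (-u ^ 2 / (2 * n))) := by
  have h1 := hoeffding_tail μ Z hm hind c hb u hu
  have h2 : μ {ω | u ≤ ∑ i, ((-Z i) ω - μ[(-Z i)])} ≤
      ENNReal.ofReal (Real.exp (-u ^ 2 / (2 * n))) := by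
    apply hoeffding_tail μ (fun i => -Z i) (fun i => (hm i).neg) _ (fun i => -(c i) - 1)
      (fun i => by
        filter_upwards [hb i] with ω h
        simp only [Pi.neg_apply, Set.mem_Icc]
        constructor <;> [linarith [h.2]; linarith [h.1]]) u hu
    exact hind.comp (fun i x => -x) (fun i => measurable_neg)
  have hsub : {ω | u < |∑ i, Z i ω - ∑ i, μ[Z i]|} ⊆
      {ω | u ≤ ∑ i, (Z i ω - μ[Z i])} ∪ {ω | u ≤ ∑ i, ((-Z i) ω - μ[(-Z i)])} := by
    intro ω hω
    simp only [Set.mem_setOf_eq] at hω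
    rcases abs_cases (∑ i, Z i ω - ∑ i, μ[Z i]) with ⟨he, _⟩ | ⟨he, _⟩
    · left
      simp only [Set.mem_setOf_eq, Finset.sum_sub_distrib]
      rw [he] at hω; linarith
    · right
      simp only [Set.mem_setOf_eq, Pi.neg_apply, integral_neg, Finset.sum_sub_distrib]
      have heq : (∑ i : Fin n, -Z i ω) - ∑ i : Fin n, -(μ[Z i]) =
          -((∑ i : Fin n, Z i ω) - ∑ i : Fin n, μ[Z i]) := by
        rw [Finset.sum_neg_distrib, Finset.sum_neg_distrib]; ring
      rw [heq]; rw [he] at hω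
      linarith
  calc μ {ω | u < |∑ i, Z i ω - ∑ i, μ[Z i]|} ≤ μ ({ω | u ≤ ∑ i, (Z i ω - μ[Z i])} ∪
        {ω | u ≤ ∑ i, ((-Z i) ω - μ[(-Z i)])}) := measure_mono hsub
    _ ≤ μ {ω | u ≤ ∑ i, (Z i ω - μ[Z i])} + μ {ω | u ≤ ∑ i, ((-Z i) ω - μ[(-Z i)])} :=
        measure_union_le _ _
    _ ≤ ENNReal.ofReal (Real.exp (-u ^ 2 / (2 * n))) + ENNReal.ofReal (Real.exp (-u ^ 2 / (2 * n))) := add_le_add h1 h2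
    _ = 2 * ENNReal.ofReal (Real.exp (-u ^ 2 / (2 * n))) := (two_mul _).symm

end hoeffding



/-- real conjTranspose is transpose -/
lemma realCT {m n : ℕ} (A : Matrix (Fin m) (Fin n) ℝ) : Aᴴ = Aᵀ :=
  Matrix.conjTranspose_eq_transpose_of_trivial A

variable {m : ℕ}

/-- sorted (descending) eigenvalues -/
def sortedEig {H : Matrix (Fin m) (Fin m) ℝ} (hH : H.IsHermitian) (k : Fin m) : ℝ :=
  hH.eigenvalues (Tuple.sort (fun j => -hH.eigenvalues j) k)

lemma sortedEig_congr {H₁ H₂ : Matrix (Fin m) (Fin m) ℝ} (h : H₁ = H₂)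
    (h₁ : H₁.IsHermitian) (h₂ : H₂.IsHermitian) (k : Fin m) :
    sortedEig h₁ k = sortedEig h₂ k := by subst h; rfl

lemma sortedEig_anti {H : Matrix (Fin m) (Fin m) ℝ} (hH : H.IsHermitian) {k l : Fin m}
    (hkl : k ≤ l) : sortedEig hH l ≤ sortedEig hH k := by
  have := Tuple.monotone_sort (fun j => -hH.eigenvalues j) hkl
  simp only [Function.comp_apply] at this
  unfold sortedEig
  linarith

/-- the sorted orthonormal eigenbasis -/
def sbasis {H : Matrix (Fin m) (Fin m) ℝ} (hH : H.IsHermitian) :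
    OrthonormalBasis (Fin m) ℝ (EuclideanSpace ℝ (Fin m)) :=
  hH.eigenvectorBasis.reindex (Tuple.sort (fun j => -hH.eigenvalues j) : Equiv.Perm (Fin m)).symm

lemma sbasis_apply {H : Matrix (Fin m) (Fin m) ℝ} (hH : H.IsHermitian) (k : Fin m) :
    sbasis hH k = hH.eigenvectorBasis (Tuple.sort (fun j => -hH.eigenvalues j) k) := by
  unfold sbasis
  rw [OrthonormalBasis.reindex_apply]
  simp

lemma mulVec_sbasis {H : Matrix (Fin m) (Fin m) ℝ} (hH : H.IsHermitian) (k : Fin m) :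
    H *ᵥ (sbasis hH k : Fin m → ℝ) = sortedEig hH k • (sbasis hH k : Fin m → ℝ) := by
  rw [sbasis_apply]
  exact hH.mulVec_eigenvectorBasis _

lemma inner_eq_dot (x y : EuclideanSpace ℝ (Fin m)) :
    (inner ℝ x y : ℝ) = (x : Fin m → ℝ) ⬝ᵥ (y : Fin m → ℝ) := by
  simp [EuclideanSpace.inner_eq_star_dotProduct]
  exact dotProduct_comm _ _


lemma parse (b : OrthonormalBasis (Fin m) ℝ (EuclideanSpace ℝ (Fin m)))
    (x y : EuclideanSpace ℝ (Fin m)) :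
    (inner ℝ x y : ℝ) = ∑ j, (inner ℝ (b j) x : ℝ) * (inner ℝ (b j) y : ℝ) := by
  rw [← b.sum_inner_mul_inner x y]
  congr 1; ext j
  rw [real_inner_comm x (b j)]

lemma transp_of_herm {H : Matrix (Fin m) (Fin m) ℝ} (hH : H.IsHermitian) : Hᵀ = H := by
  rw [← realCT]; exact hH

lemma reprH {H : Matrix (Fin m) (Fin m) ℝ} (hH : H.IsHermitian) (j : Fin m)
    (v : EuclideanSpace ℝ (Fin m)) :
    (inner ℝ (sbasis hH j) (WithLp.toLp 2 (H *ᵥ v) : EuclideanSpace ℝ (Fin m)) : ℝ) =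
      sortedEig hH j * (inner ℝ (sbasis hH j) v : ℝ) := by
  rw [inner_eq_dot, inner_eq_dot]
  have h1 : (sbasis hH j : Fin m → ℝ) ⬝ᵥ (H *ᵥ v) =
      (H *ᵥ (sbasis hH j : Fin m → ℝ)) ⬝ᵥ (v : Fin m → ℝ) := by
    rw [Matrix.dotProduct_mulVec, ← Matrix.mulVec_transpose, transp_of_herm hH]
  rw [h1, mulVec_sbasis, smul_dotProduct]
  rfl

/-- existence of a nonzero vector in a submodule orthogonal to given r < dim vectors -/
lemma exists_nullvec (V : Submodule ℝ (EuclideanSpace ℝ (Fin m))) (r : ℕ)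
    (hr : r < Module.finrank ℝ V) (w : Fin r → EuclideanSpace ℝ (Fin m)) :
    ∃ v : EuclideanSpace ℝ (Fin m), v ∈ V ∧ v ≠ 0 ∧ ∀ i, (inner ℝ (w i) v : ℝ) = 0 := by
  let φ : V →ₗ[ℝ] (Fin r → ℝ) :=
    { toFun := fun v => fun i => (inner ℝ (w i) (v : EuclideanSpace ℝ (Fin m)) : ℝ)
      map_add' := by intro a b; funext i; simp [inner_add_right]
      map_smul' := by
        intro c a; funext i
        simp only [Submodule.coe_smul, RingHom.id_apply, Pi.smul_apply, smul_eq_mul]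
        rw [real_inner_smul_right] }
  have hker : LinearMap.ker φ ≠ ⊥ := by
    intro hbot
    have h1 := LinearMap.finrank_range_add_finrank_ker φ
    rw [hbot, finrank_bot, add_zero] at h1
    have h2 : Module.finrank ℝ (LinearMap.range φ) ≤ r := by
      have := Submodule.finrank_le (LinearMap.range φ)
      rwa [Module.finrank_pi, Fintype.card_fin] at this
    omega
  obtain ⟨x, hx, hx0⟩ := Submodule.exists_mem_ne_zero_of_ne_bot hker
  refine ⟨(x : EuclideanSpace ℝ (Fin m)), x.2, ?_, ?_⟩
  · intro h
    apply hx0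
    exact Subtype.ext h
  · intro i
    have := LinearMap.mem_ker.1 hx
    have h2 := congrFun this i
    exact h2


local notation "E" => EuclideanSpace ℝ (Fin m)

variable {H : Matrix (Fin m) (Fin m) ℝ}

lemma coeff_vanish (hH : H.IsHermitian) {r : ℕ} (f : Fin r → Fin m)
    (v : E) (hv : v ∈ Submodule.span ℝ (Set.range (fun i => (sbasis hH (f i) : E))))
    (j : Fin m) (hj : ∀ i, f i ≠ j) : (inner ℝ (sbasis hH j) v : ℝ) = 0 := by
  obtain ⟨c, rfl⟩ := (Submodule.mem_span_range_iff_exists_fun ℝ).1 hv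
  rw [inner_sum]
  apply Finset.sum_eq_zero
  intro i _
  rw [real_inner_smul_right, (sbasis hH).orthonormal.2 (Ne.symm (hj i)), mul_zero]

lemma finrank_span_sbasis (hH : H.IsHermitian) {r : ℕ} (f : Fin r → Fin m)
    (hf : Function.Injective f) :
    Module.finrank ℝ
      (Submodule.span ℝ (Set.range (fun i => (sbasis hH (f i) : E)))) = r := by
  have h := finrank_span_eq_card (((sbasis hH).orthonormal.comp f hf).linearIndependent)
  rw [Fintype.card_fin] at h
  have he : (Set.range fun i => (sbasis hH (f i) : E)) = Set.range (⇑(sbasis hH) ∘ f) := rfl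
  rw [he, h]

lemma rayleigh_eq (hH : H.IsHermitian) (v : E) :
    (inner ℝ v (WithLp.toLp 2 (H *ᵥ v) : E) : ℝ) =
      ∑ j, sortedEig hH j * (inner ℝ (sbasis hH j) v : ℝ) ^ 2 := by
  rw [parse (sbasis hH)]
  congr 1; funext j
  rw [reprH hH j v]; ring

lemma self_inner_eq (v : E) (b : OrthonormalBasis (Fin m) ℝ E) :
    (inner ℝ v v : ℝ) = ∑ j, (inner ℝ (b j) v : ℝ) ^ 2 := by
  rw [parse b]
  congr 1; funext j; ring

lemma inner_self_pos' {v : E} (hv : v ≠ 0) : (0:ℝ) < inner ℝ v v := by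
  rcases lt_or_eq_of_le (real_inner_self_nonneg (x := v)) with h | h
  · exact h
  · exact absurd (inner_self_eq_zero.1 h.symm) hv

lemma eig_low (hH : H.IsHermitian) (k : Fin m) (t : ℝ) (V : Submodule ℝ E)
    (hdim : (k:ℕ) < Module.finrank ℝ V)
    (hray : ∀ v ∈ V, t * (inner ℝ v v : ℝ) ≤ (inner ℝ v (WithLp.toLp 2 (H *ᵥ v) : E) : ℝ)) :
    t ≤ sortedEig hH k := by
  obtain ⟨v, hvV, hv0, hvorth⟩ := exists_nullvec V k hdim
    (fun i => sbasis hH ⟨i.1, lt_trans i.2 k.2⟩)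
  have hcoeff : ∀ j : Fin m, (j:ℕ) < (k:ℕ) → (inner ℝ (sbasis hH j) v : ℝ) = 0 := by
    intro j hj
    have := hvorth ⟨j.1, hj⟩
    convert this using 3
  have h2 : (inner ℝ v (WithLp.toLp 2 (H *ᵥ v) : E) : ℝ) ≤ sortedEig hH k * (inner ℝ v v : ℝ) := by
    rw [rayleigh_eq hH v, self_inner_eq v (sbasis hH), Finset.mul_sum]
    apply Finset.sum_le_sum
    intro j _
    rcases lt_or_ge (j:ℕ) (k:ℕ) with hj | hj
    · rw [hcoeff j hj]; simp
    · have : sortedEig hH j ≤ sortedEig hH k := sortedEig_anti hH (by exact hj)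
      nlinarith [sq_nonneg (inner ℝ (sbasis hH j) v : ℝ)]
  have h1 := hray v hvV
  have hp := inner_self_pos' hv0
  nlinarith

lemma eig_high (hH : H.IsHermitian) (k : Fin m) (t : ℝ) (V : Submodule ℝ E)
    (hdim : m - 1 - (k:ℕ) < Module.finrank ℝ V)
    (hray : ∀ v ∈ V, (inner ℝ v (WithLp.toLp 2 (H *ᵥ v) : E) : ℝ) ≤ t * (inner ℝ v v : ℝ)) :
    sortedEig hH k ≤ t := by
  obtain ⟨v, hvV, hv0, hvorth⟩ := exists_nullvec V (m - 1 - (k:ℕ)) hdim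
    (fun i => sbasis hH ⟨(k:ℕ) + 1 + i.1, by omega⟩)
  have hcoeff : ∀ j : Fin m, (k:ℕ) < (j:ℕ) → (inner ℝ (sbasis hH j) v : ℝ) = 0 := by
    intro j hj
    have hlt : (j:ℕ) - (k:ℕ) - 1 < m - 1 - (k:ℕ) := by omega
    have := hvorth ⟨(j:ℕ) - (k:ℕ) - 1, hlt⟩
    convert this using 3
    exact Fin.ext (by simp; omega)
  have h2 : sortedEig hH k * (inner ℝ v v : ℝ) ≤ (inner ℝ v (WithLp.toLp 2 (H *ᵥ v) : E) : ℝ) := by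
    rw [rayleigh_eq hH v, self_inner_eq v (sbasis hH), Finset.mul_sum]
    apply Finset.sum_le_sum
    intro j _
    rcases lt_or_ge (k:ℕ) (j:ℕ) with hj | hj
    · rw [hcoeff j hj]; simp
    · have : sortedEig hH k ≤ sortedEig hH j := sortedEig_anti hH (by exact hj)
      nlinarith [sq_nonneg (inner ℝ (sbasis hH j) v : ℝ)]
  have h1 := hray v hvV
  have hp := inner_self_pos' hv0
  nlinarith


/-- span of the top k+1 sorted eigenvectors -/
def topSpan (hH : H.IsHermitian) (k : Fin m) : Submodule ℝ E :=
  Submodule.span ℝ (Set.range (fun i : Fin ((k:ℕ)+1) => (sbasis hH ⟨i.1, by omega⟩ : E)))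

/-- span of the bottom m - k sorted eigenvectors -/
def botSpan (hH : H.IsHermitian) (k : Fin m) : Submodule ℝ E :=
  Submodule.span ℝ (Set.range (fun i : Fin (m - (k:ℕ)) => (sbasis hH ⟨(k:ℕ) + i.1, by omega⟩ : E)))

lemma finrank_topSpan (hH : H.IsHermitian) (k : Fin m) :
    Module.finrank ℝ (topSpan hH k) = (k:ℕ) + 1 :=
  finrank_span_sbasis hH _ (fun a b hab => by
    simp only [Fin.mk.injEq] at hab; exact Fin.ext hab)

lemma finrank_botSpan (hH : H.IsHermitian) (k : Fin m) :
    Module.finrank ℝ (botSpan hH k) = m - (k:ℕ) :=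
  finrank_span_sbasis hH _ (fun a b hab => by
    simp only [Fin.mk.injEq] at hab; exact Fin.ext (by omega))

lemma ray_top (hH : H.IsHermitian) (k : Fin m) (v : E) (hv : v ∈ topSpan hH k) :
    sortedEig hH k * (inner ℝ v v : ℝ) ≤ (inner ℝ v (WithLp.toLp 2 (H *ᵥ v) : E) : ℝ) := by
  have hvan : ∀ j : Fin m, (k:ℕ) < (j:ℕ) → (inner ℝ (sbasis hH j) v : ℝ) = 0 := by
    intro j hj
    apply coeff_vanish hH _ v hv j
    intro i hi
    have := congrArg (fun x : Fin m => (x:ℕ)) hi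
    simp only at this
    omega
  rw [rayleigh_eq hH v, self_inner_eq v (sbasis hH), Finset.mul_sum]
  apply Finset.sum_le_sum
  intro j _
  rcases lt_or_ge (k:ℕ) (j:ℕ) with hj | hj
  · rw [hvan j hj]; simp
  · have : sortedEig hH k ≤ sortedEig hH j := sortedEig_anti hH (by exact hj)
    nlinarith [sq_nonneg (inner ℝ (sbasis hH j) v : ℝ)]

lemma ray_bot (hH : H.IsHermitian) (k : Fin m) (v : E) (hv : v ∈ botSpan hH k) :
    (inner ℝ v (WithLp.toLp 2 (H *ᵥ v) : E) : ℝ) ≤ sortedEig hH k * (inner ℝ v v : ℝ) := by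
  have hvan : ∀ j : Fin m, (j:ℕ) < (k:ℕ) → (inner ℝ (sbasis hH j) v : ℝ) = 0 := by
    intro j hj
    apply coeff_vanish hH _ v hv j
    intro i hi
    have := congrArg (fun x : Fin m => (x:ℕ)) hi
    simp only at this
    omega
  rw [rayleigh_eq hH v, self_inner_eq v (sbasis hH), Finset.mul_sum]
  apply Finset.sum_le_sum
  intro j _
  rcases lt_or_ge (j:ℕ) (k:ℕ) with hj | hj
  · rw [hvan j hj]; simp
  · have : sortedEig hH j ≤ sortedEig hH k := sortedEig_anti hH (by exact hj)
    nlinarith [sq_nonneg (inner ℝ (sbasis hH j) v : ℝ)]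

lemma hdim_bot (hH : H.IsHermitian) (k : Fin m) :
    m - 1 - (k:ℕ) < Module.finrank ℝ (botSpan hH k) := by
  rw [finrank_botSpan]
  have := k.2
  omega

lemma hdim_top (hH : H.IsHermitian) (k : Fin m) :
    (k:ℕ) < Module.finrank ℝ (topSpan hH k) := by
  rw [finrank_topSpan]; omega

lemma sortedEig_smul {c : ℝ} (hc : 0 ≤ c) (hH : H.IsHermitian) (hcH : (c • H).IsHermitian)
    (k : Fin m) : sortedEig hcH k = c * sortedEig hH k := by
  have hmv : ∀ v : E, (inner ℝ v (WithLp.toLp 2 ((c • H) *ᵥ v) : E) : ℝ) =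
      c * (inner ℝ v (WithLp.toLp 2 (H *ᵥ v) : E) : ℝ) := by
    intro v
    rw [Matrix.smul_mulVec]
    exact real_inner_smul_right v (WithLp.toLp 2 (H *ᵥ v) : E) c
  apply le_antisymm
  · apply eig_high hcH k _ (botSpan hH k) (hdim_bot hH k)
    intro v hv
    rw [hmv v, mul_assoc]
    exact mul_le_mul_of_nonneg_left (ray_bot hH k v hv) hc
  · apply eig_low hcH k _ (topSpan hH k) (hdim_top hH k)
    intro v hv
    rw [hmv v, mul_assoc]
    exact mul_le_mul_of_nonneg_left (ray_top hH k v hv) hc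

lemma weyl_le {A B : Matrix (Fin m) (Fin m) ℝ} (hA : A.IsHermitian) (hB : B.IsHermitian)
    (r : ℝ) (hray : ∀ v : E, (inner ℝ v (WithLp.toLp 2 ((A - B) *ᵥ v) : E) : ℝ) ≤ r * (inner ℝ v v : ℝ))
    (k : Fin m) : sortedEig hA k ≤ sortedEig hB k + r := by
  apply eig_high hA k _ (botSpan hB k) (hdim_bot hB k)
  intro v hv
  have hsplit : (inner ℝ v (WithLp.toLp 2 (A *ᵥ v) : E) : ℝ) =
      (inner ℝ v (WithLp.toLp 2 (B *ᵥ v) : E) : ℝ) + (inner ℝ v (WithLp.toLp 2 ((A - B) *ᵥ v) : E) : ℝ) := by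
    have hsum : (WithLp.toLp 2 (A *ᵥ v) : E) = (WithLp.toLp 2 (B *ᵥ v) : E) + (WithLp.toLp 2 ((A - B) *ᵥ v) : E) := by
      rw [← WithLp.toLp_add]; congr 1
      rw [Matrix.sub_mulVec]; abel
    rw [hsum, inner_add_right]
  rw [hsplit]
  have h1 := ray_bot hB k v hv
  have h2 := hray v
  linarith [h1, h2, mul_le_mul_of_nonneg_right (le_refl r) (real_inner_self_nonneg (x := v))]

lemma weyl_abs {A B : Matrix (Fin m) (Fin m) ℝ} (hA : A.IsHermitian) (hB : B.IsHermitian)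
    (r : ℝ) (hray : ∀ v : E, |(inner ℝ v (WithLp.toLp 2 ((A - B) *ᵥ v) : E) : ℝ)| ≤ r * (inner ℝ v v : ℝ))
    (k : Fin m) : |sortedEig hA k - sortedEig hB k| ≤ r := by
  rw [abs_le]
  constructor
  · have := weyl_le hB hA r (fun v => by
      have h := hray v
      have hBA : (WithLp.toLp 2 ((B - A) *ᵥ v) : E) = -(WithLp.toLp 2 ((A - B) *ᵥ v) : E) := by
        rw [← WithLp.toLp_neg]; congr 1
        rw [Matrix.sub_mulVec, Matrix.sub_mulVec]; abel
      rw [hBA, inner_neg_right]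
      calc -(inner ℝ v (WithLp.toLp 2 ((A - B) *ᵥ v) : E) : ℝ) ≤ |(inner ℝ v (WithLp.toLp 2 ((A - B) *ᵥ v) : E) : ℝ)| := neg_le_abs _
        _ ≤ r * (inner ℝ v v : ℝ) := h) k
    linarith
  · have := weyl_le hA hB r (fun v => le_trans (le_abs_self _) (hray v)) k
    linarith

lemma entrywise_rayleigh {M : Matrix (Fin m) (Fin m) ℝ} {u : ℝ} (hu : 0 ≤ u)
    (hM : ∀ a b, |M a b| ≤ u) (v : E) :
    |(inner ℝ v (WithLp.toLp 2 (M *ᵥ v) : E) : ℝ)| ≤ ((m:ℝ) * u) * (inner ℝ v v : ℝ) := by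
  rw [inner_eq_dot, inner_eq_dot]
  have h1 : |(v : Fin m → ℝ) ⬝ᵥ (M *ᵥ v)| ≤ ∑ a, ∑ b, |v a| * (u * |v b|) := by
    calc |(v : Fin m → ℝ) ⬝ᵥ (M *ᵥ v)| = |∑ a, v a * ∑ b, M a b * v b| := rfl
      _ ≤ ∑ a, |v a * ∑ b, M a b * v b| := Finset.abs_sum_le_sum_abs _ _
      _ ≤ ∑ a, ∑ b, |v a| * (u * |v b|) := by
          apply Finset.sum_le_sum
          intro a _
          rw [abs_mul]
          calc |v a| * |∑ b, M a b * v b| ≤ |v a| * ∑ b, u * |v b| := by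
                apply mul_le_mul_of_nonneg_left _ (abs_nonneg _)
                calc |∑ b, M a b * v b| ≤ ∑ b, |M a b * v b| := Finset.abs_sum_le_sum_abs _ _
                  _ ≤ ∑ b, u * |v b| := by
                      apply Finset.sum_le_sum
                      intro b _
                      rw [abs_mul]
                      exact mul_le_mul_of_nonneg_right (hM a b) (abs_nonneg _)
            _ = ∑ b, |v a| * (u * |v b|) := Finset.mul_sum _ _ _
  have h2 : ∑ a, ∑ b, |v a| * (u * |v b|) = u * (∑ a, |v a|) ^ 2 := by
    rw [sq]
    rw [Finset.sum_mul_sum]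
    rw [Finset.mul_sum]
    congr 1; funext a
    rw [Finset.mul_sum]
    congr 1; funext b
    ring
  have h3 : (∑ a, |v a|) ^ 2 ≤ (m:ℝ) * ∑ a, v a ^ 2 := by
    have := Finset.sum_mul_sq_le_sq_mul_sq Finset.univ (fun _ : Fin m => (1:ℝ)) (fun a => |v a|)
    simp only [one_mul, one_pow, sq_abs] at this
    calc (∑ a, |v a|) ^ 2 ≤ (∑ _a : Fin m, (1:ℝ)) * ∑ a, v a ^ 2 := this
      _ = (m:ℝ) * ∑ a, v a ^ 2 := by simp
  have h4 : (v : Fin m → ℝ) ⬝ᵥ (v : Fin m → ℝ) = ∑ a, v a ^ 2 := by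
    unfold dotProduct
    congr 1; funext a; ring
  rw [h4]
  calc |(v : Fin m → ℝ) ⬝ᵥ (M *ᵥ v)| ≤ u * (∑ a, |v a|) ^ 2 := by rw [← h2]; exact h1
    _ ≤ u * ((m:ℝ) * ∑ a, v a ^ 2) := mul_le_mul_of_nonneg_left h3 hu
    _ = ((m:ℝ) * u) * ∑ a, v a ^ 2 := by ring


lemma psdATA {n d : ℕ} (X : Matrix (Fin n) (Fin d) ℝ) : (Xᵀ * X).PosSemidef := by
  have := Matrix.posSemidef_conjTranspose_mul_self X
  rwa [realCT] at this

lemma psdAAT {n d : ℕ} (X : Matrix (Fin n) (Fin d) ℝ) : (X * Xᵀ).PosSemidef := by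
  have := Matrix.posSemidef_self_mul_conjTranspose X
  rwa [realCT] at this

lemma sortedEig_nonneg_of_psd {H : Matrix (Fin m) (Fin m) ℝ} (hP : H.PosSemidef) (k : Fin m) :
    0 ≤ sortedEig hP.1 k :=
  hP.eigenvalues_nonneg _

lemma rayleigh_sq_eq (hH : H.IsHermitian) (v : E) :
    (inner ℝ v (WithLp.toLp 2 (H *ᵥ (H *ᵥ v)) : E) : ℝ) =
      ∑ j, (sortedEig hH j) ^ 2 * (inner ℝ (sbasis hH j) v : ℝ) ^ 2 := by
  rw [parse (sbasis hH) v (WithLp.toLp 2 (H *ᵥ (H *ᵥ v)) : E)]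
  congr 1; funext j
  have h1 : (inner ℝ (sbasis hH j) (WithLp.toLp 2 (H *ᵥ (H *ᵥ v)) : E) : ℝ) =
      sortedEig hH j * (inner ℝ (sbasis hH j) (WithLp.toLp 2 (H *ᵥ v) : E) : ℝ) :=
    reprH hH j (WithLp.toLp 2 (H *ᵥ v) : E)
  rw [h1, reprH hH j v]; ring

lemma euclid_mulVec_inner {n d : ℕ} (X : Matrix (Fin n) (Fin d) ℝ)
    (z w : EuclideanSpace ℝ (Fin d)) :
    (inner ℝ (WithLp.toLp 2 (X *ᵥ z) : EuclideanSpace ℝ (Fin n))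
      (WithLp.toLp 2 (X *ᵥ w) : EuclideanSpace ℝ (Fin n)) : ℝ) =
      (inner ℝ z (WithLp.toLp 2 ((Xᵀ * X) *ᵥ w) : EuclideanSpace ℝ (Fin d)) : ℝ) := by
  rw [inner_eq_dot, inner_eq_dot]
  show (X *ᵥ z) ⬝ᵥ (X *ᵥ w) = z ⬝ᵥ ((Xᵀ * X) *ᵥ w)
  rw [← Matrix.mulVec_mulVec, Matrix.dotProduct_mulVec z Xᵀ, ← Matrix.mulVec_transpose,
    Matrix.transpose_transpose, dotProduct_comm]

lemma abba_ge {n d : ℕ} (X : Matrix (Fin n) (Fin d) ℝ) (k : ℕ) (hkd : k < d) (hkn : k < n) :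
    sortedEig (psdATA X).1 ⟨k, hkd⟩ ≤ sortedEig (psdAAT X).1 ⟨k, hkn⟩ := by
  set hA : (Xᵀ * X).IsHermitian := (psdATA X).1
  set hB : (X * Xᵀ).IsHermitian := (psdAAT X).1
  set t : ℝ := sortedEig hA ⟨k, hkd⟩ with htdef
  rcases le_or_gt t 0 with ht | ht
  · exact le_trans ht (sortedEig_nonneg_of_psd (psdAAT X) _)
  set kd : Fin d := ⟨k, hkd⟩
  set T : Submodule ℝ (EuclideanSpace ℝ (Fin d)) := topSpan hA kd
  set L : EuclideanSpace ℝ (Fin d) →ₗ[ℝ] EuclideanSpace ℝ (Fin n) := Matrix.toEuclideanLin X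
  have hLapp : ∀ z : EuclideanSpace ℝ (Fin d),
      L z = (WithLp.toLp 2 (X *ᵥ z) : EuclideanSpace ℝ (Fin n)) := fun z => rfl
  set V : Submodule ℝ (EuclideanSpace ℝ (Fin n)) := Submodule.map L T
  -- kernel of L restricted to T is trivial
  have hkerT : ∀ z ∈ T, L z = 0 → z = 0 := by
    intro z hz hLz
    have h0 : (inner ℝ z (WithLp.toLp 2 ((Xᵀ * X) *ᵥ z) : EuclideanSpace ℝ (Fin d)) : ℝ) = 0 := by
      have hvv0 : (inner ℝ (L z) (L z) : ℝ) =
          inner ℝ z (WithLp.toLp 2 ((Xᵀ * X) *ᵥ z) : EuclideanSpace ℝ (Fin d)) :=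
        euclid_mulVec_inner X z z
      rw [← hvv0, hLz, inner_zero_left]
    have hge := ray_top hA kd z hz
    have hnn := real_inner_self_nonneg (x := z)
    have : (inner ℝ z z : ℝ) = 0 := by nlinarith
    exact inner_self_eq_zero.1 this
  have hdimV : (k:ℕ) < Module.finrank ℝ V := by
    have hrn := LinearMap.finrank_range_add_finrank_ker (L.domRestrict T)
    have hkerbot : LinearMap.ker (L.domRestrict T) = ⊥ := by
      rw [LinearMap.ker_eq_bot']
      intro z hz
      have := hkerT (z : EuclideanSpace ℝ (Fin d)) z.2 hz
      exact Subtype.ext this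
    rw [hkerbot, finrank_bot, add_zero, LinearMap.range_domRestrict] at hrn
    rw [show V = Submodule.map L T from rfl]
    rw [hrn, finrank_topSpan]
    have hkdk : (kd:ℕ) = k := rfl
    omega
  apply eig_low hB ⟨k, hkn⟩ t V hdimV
  rintro v ⟨z, hz, rfl⟩
  have hvv : (inner ℝ (L z) (L z) : ℝ) =
      (inner ℝ z (WithLp.toLp 2 ((Xᵀ * X) *ᵥ z) : EuclideanSpace ℝ (Fin d)) : ℝ) := by
    rw [hLapp z]; exact euclid_mulVec_inner X z z
  have hBv : (WithLp.toLp 2 ((X * Xᵀ) *ᵥ (L z)) : EuclideanSpace ℝ (Fin n)) =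
      L (WithLp.toLp 2 ((Xᵀ * X) *ᵥ z) : EuclideanSpace ℝ (Fin d)) := by
    rw [hLapp, hLapp]
    simp only [WithLp.ofLp_toLp]; congr 1
    rw [Matrix.mulVec_mulVec, Matrix.mulVec_mulVec, Matrix.mul_assoc]
  have hray : (inner ℝ (L z) (WithLp.toLp 2 ((X * Xᵀ) *ᵥ (L z)) : EuclideanSpace ℝ (Fin n)) : ℝ) =
      (inner ℝ z (WithLp.toLp 2 ((Xᵀ * X) *ᵥ ((Xᵀ * X) *ᵥ z)) : EuclideanSpace ℝ (Fin d)) : ℝ) := by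
    rw [hBv, hLapp z, hLapp]
    exact euclid_mulVec_inner X z _
  rw [hray, hvv]
  rw [rayleigh_sq_eq hA z, rayleigh_eq hA z, Finset.mul_sum]
  -- coefficients vanish above k
  have hvan : ∀ j : Fin d, (kd:ℕ) < (j:ℕ) → (inner ℝ (sbasis hA j) z : ℝ) = 0 := by
    intro j hj
    apply coeff_vanish hA _ z hz j
    intro i hi
    have := congrArg (fun x : Fin d => (x:ℕ)) hi
    simp only at this
    have hkdk : (kd:ℕ) = k := rfl
    omega
  apply Finset.sum_le_sum
  intro j _
  rcases lt_or_ge (kd:ℕ) (j:ℕ) with hj | hj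
  · rw [hvan j hj]; simp
  · have h1 : t ≤ sortedEig hA j := sortedEig_anti hA (by exact hj)
    have hnn : 0 ≤ sortedEig hA j * (inner ℝ (sbasis hA j) z : ℝ) ^ 2 :=
      mul_nonneg (le_trans ht.le h1) (sq_nonneg _)
    have hmul := mul_le_mul_of_nonneg_right h1 hnn
    nlinarith [hmul]

lemma abba_eq {n d : ℕ} (X : Matrix (Fin n) (Fin d) ℝ) (k : ℕ) (hkd : k < d) (hkn : k < n) :
    sortedEig (psdAAT X).1 ⟨k, hkn⟩ = sortedEig (psdATA X).1 ⟨k, hkd⟩ := by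
  apply le_antisymm
  · have h := abba_ge Xᵀ k hkn hkd
    have e1 : sortedEig (psdATA Xᵀ).1 ⟨k, hkn⟩ = sortedEig (psdAAT X).1 ⟨k, hkn⟩ :=
      sortedEig_congr (by rw [Matrix.transpose_transpose]) _ _ _
    have e2 : sortedEig (psdAAT Xᵀ).1 ⟨k, hkd⟩ = sortedEig (psdATA X).1 ⟨k, hkd⟩ :=
      sortedEig_congr (by rw [Matrix.transpose_transpose]) _ _ _
    rw [← e1, ← e2]
    exact h
  · exact abba_ge X k hkd hkn




end aux


section bridge

open Real

lemma matAbs_of_psd {m : ℕ} {H : Matrix (Fin m) (Fin m) ℝ} (hP : H.PosSemidef) :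
    matAbs H = H := by
  have hC := Matrix.posSemidef_conjTranspose_mul_self H
  have h1 : matAbs H = cfc Real.sqrt (Hᴴ * H) := by
    rw [hC.1.cfc_eq, Matrix.IsHermitian.cfc, Unitary.conjStarAlgAut_apply]
    rfl
  have hsq : Hᴴ * H = H ^ 2 := by rw [pow_two, hP.1.eq]
  rw [h1, hsq, ← cfc_comp_pow (hf := Real.continuous_sqrt.continuousOn) (ha := hP.1.isSelfAdjoint)]
  conv_rhs => rw [← cfc_id' ℝ H (ha := hP.1.isSelfAdjoint)]
  apply cfc_congr
  intro x hx
  rw [hP.1.spectrum_real_eq_range_eigenvalues] at hx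
  obtain ⟨i, rfl⟩ := hx
  exact Real.sqrt_sq (hP.eigenvalues_nonneg i)

lemma sval_eq_sortedEig {m : ℕ} (H : Matrix (Fin m) (Fin m) ℝ) (hP : H.PosSemidef)
    (k : ℕ) (h : k - 1 < m) : sval H k = sortedEig hP.1 ⟨k - 1, h⟩ := by
  unfold sval
  rw [dif_pos h]
  exact sortedEig_congr (matAbs_of_psd hP) (matAbs_posSemidef H).1 hP.1 _

lemma sortedEig_pos_of_rank {d : ℕ} {Δ : Matrix (Fin d) (Fin d) ℝ} (hP : Δ.PosSemidef)
    (hrank : Δ.rank = d) (k : Fin d) : 0 < sortedEig hP.1 k := by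
  have hall : ∀ j : Fin d, hP.1.eigenvalues j ≠ 0 := by
    intro j hj0
    have hsurj : Function.Surjective (Δ.mulVecLin) := by
      rw [← LinearMap.range_eq_top]
      apply Submodule.eq_top_of_finrank_eq
      rw [Module.finrank_pi, Fintype.card_fin]
      exact hrank
    have hinj : Function.Injective (Δ.mulVecLin) :=
      (LinearMap.injective_iff_surjective).2 hsurj
    have hev := hP.1.mulVec_eigenvectorBasis j
    rw [hj0, zero_smul] at hev
    have h0 : Δ.mulVecLin ((WithLp.equiv 2 _) (hP.1.eigenvectorBasis j)) = Δ.mulVecLin 0 := by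
      rw [Matrix.mulVecLin_apply, map_zero]
      exact hev
    have := hinj h0
    exact hP.1.eigenvectorBasis.orthonormal.ne_zero j (by
      apply (WithLp.equiv 2 _).injective
      simpa using this)
  rcases lt_or_eq_of_le (hP.eigenvalues_nonneg
      (Tuple.sort (fun j => -hP.1.eigenvalues j) k)) with h | h
  · exact h
  · exact absurd h.symm (hall _)

lemma mulmul_apply {n d : ℕ} (Y : Matrix (Fin n) (Fin d) ℝ) (a b : Fin d) :
    (Yᵀ * Y) a b = ∑ i, Y i a * Y i b := by
  rw [Matrix.mul_apply]
  congr 1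

lemma conc {n d : ℕ} (Y : Matrix (Fin n) (Fin d) ℝ) (Δ : Matrix (Fin d) (Fin d) ℝ)
    (hΔ : Δ.PosSemidef) (hdn : d ≤ n) (u : ℝ) (hu : 0 ≤ u)
    (hdev : ∀ a b, |(Yᵀ * Y) a b - (n:ℝ) * Δ a b| ≤ u)
    (k : ℕ) (hk1 : 1 ≤ k) (hkd : k ≤ d) :
    |sval (Y * Yᵀ) k - (n:ℝ) * sval Δ k| ≤ (d:ℝ) * u := by
  have hkd' : k - 1 < d := by omega
  have hkn' : k - 1 < n := by omega
  rw [sval_eq_sortedEig _ (psdAAT Y) k hkn', sval_eq_sortedEig _ hΔ k hkd']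
  rw [abba_eq Y (k-1) hkd' hkn']
  have hnΔherm : ((n:ℝ) • Δ).IsHermitian := by
    unfold Matrix.IsHermitian
    rw [realCT, Matrix.transpose_smul, transp_of_herm hΔ.1]
  have hscale : sortedEig hnΔherm ⟨k-1, hkd'⟩ =
      (n:ℝ) * sortedEig hΔ.1 ⟨k-1, hkd'⟩ :=
    sortedEig_smul (Nat.cast_nonneg n) hΔ.1 hnΔherm _
  have hray : ∀ v : EuclideanSpace ℝ (Fin d),
      |(inner ℝ v (WithLp.toLp 2 ((Yᵀ * Y - (n:ℝ) • Δ) *ᵥ v) : EuclideanSpace ℝ (Fin d)) : ℝ)| ≤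
        ((d:ℝ) * u) * (inner ℝ v v : ℝ) := by
    intro v
    apply entrywise_rayleigh hu _ v
    intro a b
    simp only [Matrix.sub_apply, Matrix.smul_apply, smul_eq_mul]
    exact hdev a b
  have hw := weyl_abs (psdATA Y).1 hnΔherm ((d:ℝ) * u) hray ⟨k-1, hkd'⟩
  rw [hscale] at hw
  exact hw

lemma ana (d : ℕ) (lam : ℝ) (hlam : 0 < lam) :
    ∃ n₁ : ℕ, 2 ≤ n₁ ∧ ∀ n : ℕ, n₁ ≤ n →
      2 * (d:ℝ) * Real.sqrt (n * Real.log n) ≤ 1/2 * n * lam := by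
  set M : ℝ := 32 * (d:ℝ)^2 / lam^2 with hM
  have hM0 : 0 ≤ M := by positivity
  refine ⟨max 2 (⌈M^2⌉₊ + 1), le_max_left _ _, ?_⟩
  intro n hn
  have hn2 : 2 ≤ n := le_trans (le_max_left _ _) hn
  have hnM : M^2 ≤ (n:ℝ) := by
    have h1 : ⌈M^2⌉₊ + 1 ≤ n := le_trans (le_max_right _ _) hn
    have h2 : M^2 ≤ (⌈M^2⌉₊ : ℝ) := Nat.le_ceil _
    have h3 : ((⌈M^2⌉₊ : ℕ) : ℝ) ≤ (n:ℝ) := by exact_mod_cast le_trans (Nat.le_succ _) h1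
    linarith
  have hn1R : (1:ℝ) ≤ (n:ℝ) := by exact_mod_cast le_trans (by norm_num) hn2
  have hnpos : (0:ℝ) < (n:ℝ) := by linarith
  have hsqrtn : M ≤ Real.sqrt n := by
    rw [show M = Real.sqrt (M^2) from (Real.sqrt_sq hM0).symm]
    exact Real.sqrt_le_sqrt hnM
  have hsq : Real.sqrt n * Real.sqrt n = (n:ℝ) := Real.mul_self_sqrt (by linarith)
  have hlogn : Real.log n ≤ 2 * Real.sqrt n := by
    have h1 : Real.log (Real.sqrt n) ≤ Real.sqrt n - 1 :=
      Real.log_le_sub_one_of_pos (Real.sqrt_pos.2 hnpos)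
    have h2 : Real.log (Real.sqrt n) = Real.log n / 2 := Real.log_sqrt (by linarith)
    linarith [h2 ▸ h1]
  have hlog0 : 0 ≤ Real.log n := Real.log_nonneg hn1R
  -- key: 16 d^2 log n ≤ n * lam^2
  have hkey : 16 * (d:ℝ)^2 * Real.log n ≤ (n:ℝ) * lam^2 := by
    have h1 : 16 * (d:ℝ)^2 * Real.log n ≤ 16 * (d:ℝ)^2 * (2 * Real.sqrt n) := by
      apply mul_le_mul_of_nonneg_left hlogn (by positivity)
    have h2 : 32 * (d:ℝ)^2 * Real.sqrt n ≤ (Real.sqrt n * lam^2) * Real.sqrt n := by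
      have : M * lam^2 = 32 * (d:ℝ)^2 := by
        rw [hM, div_mul_cancel₀ _ (by positivity)]
      nlinarith [Real.sqrt_nonneg (n:ℝ), mul_le_mul_of_nonneg_right hsqrtn
        (mul_nonneg (Real.sqrt_nonneg (n:ℝ)) (sq_nonneg lam))]
    calc 16 * (d:ℝ)^2 * Real.log n ≤ 32 * (d:ℝ)^2 * Real.sqrt n := by linarith
      _ ≤ (Real.sqrt n * lam^2) * Real.sqrt n := h2
      _ = (n:ℝ) * lam^2 := by
          rw [mul_comm (Real.sqrt n) (lam^2), mul_assoc, hsq]; ring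
  -- conclude via squares
  have hLHS : 2 * (d:ℝ) * Real.sqrt (n * Real.log n) =
      Real.sqrt (4 * (d:ℝ)^2 * (n * Real.log n)) := by
    rw [show (4 * (d:ℝ)^2 * (n * Real.log n)) = (2*(d:ℝ))^2 * (n * Real.log n) by ring]
    rw [Real.sqrt_mul (sq_nonneg _), Real.sqrt_sq (by positivity)]
  have hRHS : (1/2 * (n:ℝ) * lam) = Real.sqrt ((1/2 * (n:ℝ) * lam)^2) :=
    (Real.sqrt_sq (by positivity)).symm
  rw [hLHS, hRHS]
  apply Real.sqrt_le_sqrt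
  have := mul_le_mul_of_nonneg_left hkey (le_of_lt (mul_pos hnpos (by norm_num : (0:ℝ) < 1/4)))
  nlinarith [mul_nonneg hlog0 (le_of_lt hnpos), hkey, hnpos]

end bridge


section devbound

open Real

lemma ofReal_combine (d n : ℕ) :
    ((d*d:ℕ):ENNReal) * (2 * ENNReal.ofReal (1/(n:ℝ)^2)) =
      ENNReal.ofReal (2*(d:ℝ)^2/(n:ℝ)^2) := by
  have h2 : (2:ENNReal) = ENNReal.ofReal (2:ℝ) := by norm_num
  rw [h2, ← ENNReal.ofReal_natCast (d*d), ← ENNReal.ofReal_mul (by norm_num : (0:ℝ) ≤ 2),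
    ← ENNReal.ofReal_mul (by positivity)]
  congr 1
  push_cast
  ring

lemma dev_bound {Ω : Type} [MeasurableSpace Ω] (μ : Measure Ω) [IsProbabilityMeasure μ]
    {d : ℕ} (F : Measure (Fin d → ℝ)) [IsProbabilityMeasure F]
    {s' : Set (Fin d → ℝ)} (hs'meas : MeasurableSet s') (hFs' : F s' = 1)
    (hxx : ∀ x ∈ s', x ⬝ᵥ x ≤ 1)
    {n : ℕ} (X : Ω → Matrix (Fin n) (Fin d) ℝ)
    (hmeas : ∀ i, Measurable fun ω => X ω i)
    (hiid : ∀ S : Fin n → Set (Fin d → ℝ), (∀ i, MeasurableSet (S i)) →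
      μ {ω | ∀ i, X ω i ∈ S i} = ∏ i, F (S i))
    (a b : Fin d) (u : ℝ) (hu : 0 ≤ u) :
    μ {ω | u < |(∑ i, X ω i a * X ω i b) - (n:ℝ) * (smm F) a b|} ≤
      2 * ENNReal.ofReal (Real.exp (-u ^ 2 / (2 * n))) := by
  classical
  have hgmeas : Measurable fun x : Fin d → ℝ => x a * x b :=
    (measurable_pi_apply a).mul (measurable_pi_apply b)
  -- row laws
  have hrowlaw : ∀ (i : Fin n) (S : Set (Fin d → ℝ)), MeasurableSet S →
      μ ((fun ω => X ω i) ⁻¹' S) = F S := by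
    intro i S hS
    have h := hiid (fun j => if j = i then S else Set.univ) (fun j => by
      by_cases hj : j = i <;> simp [hj, hS])
    have hset : {ω | ∀ j, X ω j ∈ (if j = i then S else Set.univ)} =
        (fun ω => X ω i) ⁻¹' S := by
      ext ω
      simp only [Set.mem_setOf_eq, Set.mem_preimage]
      constructor
      · intro hall
        have := hall i
        simpa using this
      · intro hmem j
        by_cases hj : j = i <;> simp [hj, hmem]
    rw [hset] at h
    rw [h, Finset.prod_eq_single i (fun j _ hj => by simp [hj]) (by simp)]
    simp
  have hindrows : iIndepFun (fun i ω => X ω i) μ := by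
    rw [ProbabilityTheory.iIndepFun_iff_measure_inter_preimage_eq_mul]
    intro Sfin sets hsets
    have hset : (⋂ i ∈ Sfin, (fun ω => X ω i) ⁻¹' sets i) =
        {ω | ∀ i, X ω i ∈ (if i ∈ Sfin then sets i else Set.univ)} := by
      ext ω
      simp only [Set.mem_iInter, Set.mem_preimage, Set.mem_setOf_eq]
      constructor
      · intro h i
        by_cases hi : i ∈ Sfin <;> simp [hi, h]
      · intro h i hi
        have := h i
        rwa [if_pos hi] at this
    rw [hset, hiid _ (fun i => by
      by_cases hi : i ∈ Sfin
      · simpa [hi] using hsets i hi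
      · simp [hi])]
    have hprod : (∏ i : Fin n, F (if i ∈ Sfin then sets i else Set.univ)) =
        ∏ i : Fin n, (if i ∈ Sfin then F (sets i) else 1) := by
      apply Finset.prod_congr rfl
      intro i _
      by_cases hi : i ∈ Sfin <;> simp [hi]
    rw [hprod, Finset.prod_ite_mem Finset.univ Sfin (fun i => F (sets i)),
      Finset.univ_inter]
    exact Finset.prod_congr rfl (fun i hi => (hrowlaw i (sets i) (hsets i hi)).symm)
  set Z : Fin n → Ω → ℝ := fun i ω => X ω i a * X ω i b with hZdef
  have hmeasZ : ∀ i, Measurable (Z i) := fun i =>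
    ((measurable_pi_apply a).comp (hmeas i)).mul ((measurable_pi_apply b).comp (hmeas i))
  have hindZ : iIndepFun Z μ := by
    have := hindrows.comp (fun _ x => x a * x b) (fun _ => hgmeas)
    exact this
  have haes' : ∀ i, ∀ᵐ ω ∂μ, X ω i ∈ s' := by
    intro i
    rw [ae_iff]
    have hs : {ω | ¬ X ω i ∈ s'} = (fun ω => X ω i) ⁻¹' s'ᶜ := rfl
    rw [hs, hrowlaw i _ hs'meas.compl, prob_compl_eq_one_sub hs'meas, hFs']
    simp
  have hsingle : ∀ x : Fin d → ℝ, ∀ c : Fin d, x c * x c ≤ x ⬝ᵥ x := by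
    intro x c
    unfold dotProduct
    exact Finset.single_le_sum (f := fun j => x j * x j)
      (fun j _ => mul_self_nonneg _) (Finset.mem_univ c)
  have hpair : ∀ x : Fin d → ℝ, a ≠ b → x a * x a + x b * x b ≤ x ⬝ᵥ x := by
    intro x hab
    unfold dotProduct
    have hsub : ({a, b} : Finset (Fin d)) ⊆ Finset.univ := Finset.subset_univ _
    have := Finset.sum_le_sum_of_subset_of_nonneg hsub
      (fun j _ _ => mul_self_nonneg (x j))
    rwa [Finset.sum_pair hab] at this
  set cc : ℝ := if a = b then 0 else -(1/2) with hccdef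
  have hbZ : ∀ i, ∀ᵐ ω ∂μ, Z i ω ∈ Set.Icc cc (cc + 1) := by
    intro i
    filter_upwards [haes' i] with ω hω
    have hx1 : X ω i ⬝ᵥ X ω i ≤ 1 := hxx _ hω
    by_cases hab : a = b
    · subst hab
      have hcc0 : cc = 0 := by rw [hccdef, if_pos rfl]
      have hZv : Z i ω = X ω i a * X ω i a := rfl
      rw [hcc0, hZv, Set.mem_Icc, zero_add]
      exact ⟨mul_self_nonneg _, le_trans (hsingle _ a) hx1⟩
    · have h2 := hpair (X ω i) hab
      have hcc0 : cc = -(1/2) := by rw [hccdef, if_neg hab]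
      have hZv : Z i ω = X ω i a * X ω i b := rfl
      rw [hcc0, hZv, Set.mem_Icc]
      constructor
      · nlinarith [sq_nonneg (X ω i a + X ω i b)]
      · nlinarith [sq_nonneg (X ω i a - X ω i b)]
  have hmap : ∀ i, μ.map (fun ω => X ω i) = F := fun i => Measure.ext (fun S hS => by
    rw [Measure.map_apply (hmeas i) hS]
    exact hrowlaw i S hS)
  have hEZ : ∀ i : Fin n, μ[Z i] = (smm F) a b := by
    intro i
    have h1 : (smm F) a b = ∫ x, x a * x b ∂F := rfl
    rw [h1, ← hmap i, integral_map (hmeas i).aemeasurable hgmeas.aestronglyMeasurable]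
  have h := hoeffding_two_sided μ Z hmeasZ hindZ (fun _ => cc) hbZ u hu
  have hsum : (∑ i, μ[Z i]) = (n:ℝ) * (smm F) a b := by
    rw [Finset.sum_congr rfl (fun i _ => hEZ i), Finset.sum_const, Finset.card_univ,
      Fintype.card_fin, nsmul_eq_mul]
  rw [hsum] at h
  exact h

end devbound

set_option maxHeartbeats 2000000 in
/-- (Concentration and linear growth of the top eigenvalues of
`P = XXᵀ`.)  For i.i.d. rows `X_1, …, X_n ∼ F` with rank-`d` second moment matrix
`Δ`, with probability at least `1 − 2d²/n²`:
`|λ_i(XXᵀ) − n λ_i(Δ)| ≤ 2d √(n log n)` for all `1 ≤ i ≤ d`; in particular, almost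
surely `λ_i(XXᵀ) = Ω(n λ_i(Δ))` and the `d` nonzero eigenvalues of `P` grow at least
linearly in `n`. -/
theorem eigenvalue_concentration
    {Ω : Type} [MeasurableSpace Ω] (μ : Measure Ω) [IsProbabilityMeasure μ]
    (d : ℕ) (F : Measure (Fin d → ℝ)) (suppF : Set (Fin d → ℝ))
    (hF : InnerProdDist F suppF)
    (hrank : (smm F).rank = d)
    (X : ∀ n : ℕ, Ω → Matrix (Fin n) (Fin d) ℝ)
    (hmeas : ∀ n i, Measurable fun ω => X n ω i)
    (hiid : ∀ (n : ℕ) (S : Fin n → Set (Fin d → ℝ)), (∀ i, MeasurableSet (S i)) →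
      μ {ω | ∀ i, X n ω i ∈ S i} = ∏ i, F (S i)) :
    (∀ n : ℕ,
      ENNReal.ofReal (1 - 2 * d ^ 2 / (n : ℝ) ^ 2) ≤
        μ {ω | ∀ k : ℕ, 1 ≤ k → k ≤ d →
          |sval (X n ω * (X n ω)ᵀ) k - (n : ℝ) * sval (smm F) k| ≤
            2 * d * Real.sqrt ((n : ℝ) * Real.log n)}) ∧
    (∀ᵐ ω ∂μ, ∀ k : ℕ, 1 ≤ k → k ≤ d →
      ∃ c > (0:ℝ), ∃ n₀ : ℕ, ∀ n ≥ n₀,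
        c * ((n : ℝ) * sval (smm F) k) ≤ sval (X n ω * (X n ω)ᵀ) k) ∧
    (∀ᵐ ω ∂μ, ∃ c > (0:ℝ), ∃ n₀ : ℕ, ∀ n ≥ n₀, ∀ k : ℕ, 1 ≤ k → k ≤ d →
      c * (n : ℝ) ≤ sval (X n ω * (X n ω)ᵀ) k) := by
  classical
  have hFprob : IsProbabilityMeasure F := hF.1
  obtain ⟨tset, htsub, htmeas, htnull⟩ := MeasureTheory.exists_measurable_superset_of_null hF.2.1
  set s' : Set (Fin d → ℝ) := tsetᶜ with hs'def
  have hs'meas : MeasurableSet s' := htmeas.compl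
  have hs'sub : s' ⊆ suppF := by
    intro x hx
    by_contra hxs
    exact hx (htsub hxs)
  have hFs' : F s' = 1 := by
    rw [hs'def, prob_compl_eq_one_sub htmeas, htnull, tsub_zero]
  have hxx : ∀ x ∈ s', x ⬝ᵥ x ≤ 1 := fun x hx => (hF.2.2 x (hs'sub hx) x (hs'sub hx)).2
  set Δ : Matrix (Fin d) (Fin d) ℝ := smm F with hΔdef
  have hgmeas : ∀ a b : Fin d, Measurable fun x : Fin d → ℝ => x a * x b := fun a b =>
    (measurable_pi_apply a).mul (measurable_pi_apply b)
  have hFsae : ∀ᵐ x ∂F, x ∈ s' := by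
    rw [ae_iff]
    have hs : {x | ¬ x ∈ s'} = tset := by
      ext x
      simp [hs'def]
    rw [hs]
    exact htnull
  have hsingle : ∀ x : Fin d → ℝ, ∀ c : Fin d, x c * x c ≤ x ⬝ᵥ x := by
    intro x c
    unfold dotProduct
    exact Finset.single_le_sum (f := fun j => x j * x j)
      (fun j _ => mul_self_nonneg _) (Finset.mem_univ c)
  have habs1 : ∀ x ∈ s', ∀ a b : Fin d, |x a * x b| ≤ 1 := by
    intro x hx a b
    have h1 : x a * x a ≤ 1 := le_trans (hsingle x a) (hxx x hx)
    have h2 : x b * x b ≤ 1 := le_trans (hsingle x b) (hxx x hx)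
    rw [abs_mul]
    have ha : |x a| ≤ 1 := abs_le_one_iff_mul_self_le_one.2 h1
    have hb : |x b| ≤ 1 := abs_le_one_iff_mul_self_le_one.2 h2
    calc |x a| * |x b| ≤ 1 * 1 := mul_le_mul ha hb (abs_nonneg _) zero_le_one
      _ = 1 := one_mul 1
  have hint : ∀ a b : Fin d, Integrable (fun x : Fin d → ℝ => x a * x b) F := by
    intro a b
    apply integrable_of_bound F _ (hgmeas a b).aestronglyMeasurable 1
    filter_upwards [hFsae] with x hx
    exact habs1 x hx a b
  have hΔherm : Δ.IsHermitian := by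
    unfold Matrix.IsHermitian
    rw [realCT]
    ext a b
    show Δ b a = Δ a b
    rw [hΔdef]
    show (∫ x, x b * x a ∂F) = ∫ x, x a * x b ∂F
    congr 1
    funext x
    ring
  have hΔpsd : Δ.PosSemidef := by
    refine Matrix.PosSemidef.of_dotProduct_mulVec_nonneg hΔherm (fun v => ?_)
    have hstar : star v = v := by
      funext j
      simp
    rw [hstar]
    have h1 : v ⬝ᵥ (Δ *ᵥ v) = ∑ a, ∑ b, (v a * v b) * ∫ x, x a * x b ∂F := by
      unfold dotProduct Matrix.mulVec dotProduct
      rw [hΔdef]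
      show (∑ a, v a * ∑ b, smm F a b * v b) = _
      congr 1; funext a
      rw [Finset.mul_sum]
      congr 1; funext b
      show v a * ((∫ x, x a * x b ∂F) * v b) = _
      ring
    have h2 : ∀ a b : Fin d, (v a * v b) * ∫ x, x a * x b ∂F =
        ∫ x, (v a * v b) * (x a * x b) ∂F := fun a b => (integral_const_mul _ _).symm
    have h3 : v ⬝ᵥ (Δ *ᵥ v) = ∫ x, ∑ a, ∑ b, (v a * v b) * (x a * x b) ∂F := by
      rw [h1]
      rw [Finset.sum_congr rfl (fun a _ => Finset.sum_congr rfl (fun b _ => h2 a b))]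
      rw [Finset.sum_congr rfl (fun a (_ : a ∈ Finset.univ) =>
        (integral_finset_sum Finset.univ (fun b _ => (hint a b).const_mul (v a * v b))).symm)]
      exact (integral_finset_sum Finset.univ (fun a _ => by
        apply integrable_finset_sum
        intro b _
        exact (hint a b).const_mul (v a * v b))).symm
    rw [h3]
    apply integral_nonneg
    intro x
    have h4 : ∑ a, ∑ b, (v a * v b) * (x a * x b) = (∑ a, v a * x a)^2 := by
      rw [sq, Finset.sum_mul_sum]
      congr 1; funext a
      congr 1; funext b
      ring
    show (0:ℝ) ≤ ∑ a, ∑ b, (v a * v b) * (x a * x b)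
    rw [h4]
    exact sq_nonneg _
  -- eigenvalue floor
  set lam : ℝ := if hd : 0 < d then sortedEig hΔpsd.1 ⟨d-1, by omega⟩ else 1 with hlamdef
  have hlam : 0 < lam := by
    rw [hlamdef]
    split_ifs with hd
    · exact sortedEig_pos_of_rank hΔpsd hrank _
    · exact one_pos
  have hlamle : ∀ k : ℕ, 1 ≤ k → k ≤ d → lam ≤ sval Δ k := by
    intro k hk1 hkd
    have hd : 0 < d := by omega
    have hkd' : k - 1 < d := by omega
    rw [sval_eq_sortedEig Δ hΔpsd k hkd', hlamdef, dif_pos hd]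
    exact sortedEig_anti hΔpsd.1 (by simp only [Fin.mk_le_mk]; omega)
  -- deviation machinery
  set un : ℕ → ℝ := fun n => 2 * Real.sqrt (n * Real.log n) with hundef
  have hun0 : ∀ n, 0 ≤ un n := fun n => by
    rw [hundef]
    positivity
  set SS : (n : ℕ) → Fin d → Fin d → Ω → ℝ :=
    fun n a b ω => ∑ i, X n ω i a * X n ω i b with hSSdef
  set Bad : ℕ → Set Ω := fun n => ⋃ p : Fin d × Fin d,
    {ω | un n < |SS n p.1 p.2 ω - (n:ℝ) * Δ p.1 p.2|} with hBaddef
  have hSmeas : ∀ n (a b : Fin d), Measurable (SS n a b) := by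
    intro n a b
    apply Finset.measurable_sum
    intro i _
    exact ((measurable_pi_apply a).comp (hmeas n i)).mul
      ((measurable_pi_apply b).comp (hmeas n i))
  have hBadmeas : ∀ n, MeasurableSet (Bad n) := by
    intro n
    apply MeasurableSet.iUnion
    intro p
    exact measurableSet_lt measurable_const (((hSmeas n p.1 p.2).sub measurable_const).abs)
  have htail : ∀ n (a b : Fin d),
      μ {ω | un n < |SS n a b ω - (n:ℝ) * Δ a b|} ≤
        2 * ENNReal.ofReal (Real.exp (-(un n) ^ 2 / (2 * n))) := by
    intro n a b
    exact dev_bound μ F hs'meas hFs' hxx (X n) (hmeas n) (hiid n) a b (un n) (hun0 n)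
  have hBadle : ∀ n, μ (Bad n) ≤
      ((d*d:ℕ):ENNReal) * (2 * ENNReal.ofReal (Real.exp (-(un n) ^ 2 / (2 * n)))) := by
    intro n
    calc μ (Bad n) ≤ ∑ p : Fin d × Fin d,
          μ {ω | un n < |SS n p.1 p.2 ω - (n:ℝ) * Δ p.1 p.2|} :=
        measure_iUnion_fintype_le μ _
      _ ≤ ∑ _p : Fin d × Fin d,
          2 * ENNReal.ofReal (Real.exp (-(un n) ^ 2 / (2 * n))) :=
        Finset.sum_le_sum (fun p _ => htail n p.1 p.2)
      _ = ((d*d:ℕ):ENNReal) * (2 * ENNReal.ofReal (Real.exp (-(un n) ^ 2 / (2 * n)))) := by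
        rw [Finset.sum_const, Finset.card_univ]
        simp [Fintype.card_prod, nsmul_eq_mul]
  have hexp : ∀ n : ℕ, 1 ≤ n → Real.exp (-(un n) ^ 2 / (2 * n)) = 1 / (n:ℝ)^2 := by
    intro n hn
    have hn0 : (0:ℝ) < n := by exact_mod_cast hn
    have hlog0 : 0 ≤ Real.log n := Real.log_nonneg (by exact_mod_cast hn)
    have h1 : (un n) ^ 2 = 4 * ((n:ℝ) * Real.log n) := by
      rw [hundef]
      show (2 * Real.sqrt (n * Real.log n))^2 = _
      rw [mul_pow, Real.sq_sqrt (by positivity)]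
      ring
    rw [h1]
    have h2 : -(4 * ((n:ℝ) * Real.log n)) / (2 * n) = -(2 * Real.log n) := by
      field_simp
      ring
    rw [h2, Real.exp_neg, two_mul, Real.exp_add, Real.exp_log hn0]
    rw [sq]
    norm_num
  -- good events imply concentration
  have hconc : ∀ n : ℕ, d ≤ n → ∀ ω, ω ∉ Bad n → ∀ k : ℕ, 1 ≤ k → k ≤ d →
      |sval (X n ω * (X n ω)ᵀ) k - (n:ℝ) * sval Δ k| ≤
        2 * (d:ℝ) * Real.sqrt (n * Real.log n) := by
    intro n hdn ω hω k hk1 hkd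
    rw [hBaddef] at hω
    simp only [Set.mem_iUnion, Set.mem_setOf_eq, not_exists, not_lt] at hω
    have hdev : ∀ a b : Fin d, |((X n ω)ᵀ * (X n ω)) a b - (n:ℝ) * Δ a b| ≤ un n := by
      intro a b
      have := hω (a, b)
      rw [mulmul_apply]
      exact this
    have hc := conc (X n ω) Δ hΔpsd hdn (un n) (hun0 n) hdev k hk1 hkd
    calc |sval (X n ω * (X n ω)ᵀ) k - (n:ℝ) * sval Δ k| ≤ (d:ℝ) * un n := hc
      _ = 2 * (d:ℝ) * Real.sqrt (n * Real.log n) := by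
        rw [hundef]
        ring
  refine ⟨?_, ?_, ?_⟩
  · -- bullet 1
    intro n
    rcases Nat.eq_zero_or_pos n with hn0 | hn0
    · subst hn0
      have hset : {ω | ∀ k : ℕ, 1 ≤ k → k ≤ d →
          |sval (X 0 ω * (X 0 ω)ᵀ) k - ((0:ℕ):ℝ) * sval (smm F) k| ≤
            2 * d * Real.sqrt (((0:ℕ):ℝ) * Real.log ((0:ℕ):ℝ))} = Set.univ := by
        ext ω
        simp only [Set.mem_setOf_eq, Set.mem_univ, iff_true]
        intro k hk1 hkd
        have h1 : sval (X 0 ω * (X 0 ω)ᵀ) k = 0 := by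
          unfold sval
          rw [dif_neg (by omega)]
        rw [h1]
        norm_num
      rw [hset, measure_univ]
      apply ENNReal.ofReal_le_one.2
      norm_num
    by_cases htriv : 1 - 2 * (d:ℝ)^2 / (n:ℝ)^2 ≤ 0
    · rw [ENNReal.ofReal_eq_zero.2 htriv]
      exact zero_le
    push_neg at htriv
    have hnposR : (0:ℝ) < (n:ℝ)^2 := by
      have : (0:ℝ) < (n:ℝ) := by exact_mod_cast hn0
      positivity
    have hdn2 : 2 * (d:ℝ)^2 < (n:ℝ)^2 := by
      have hlt : 2 * (d:ℝ)^2 / (n:ℝ)^2 < 1 := by linarith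
      exact (div_lt_one hnposR).1 hlt
    have hdn : d < n := by
      by_contra hc
      push_neg at hc
      have hcR : (n:ℝ) ≤ (d:ℝ) := by exact_mod_cast hc
      nlinarith [sq_nonneg (d:ℝ), sq_nonneg (n:ℝ), (show (0:ℝ) ≤ (d:ℝ) from Nat.cast_nonneg d),
        (show (0:ℝ) ≤ (n:ℝ) from Nat.cast_nonneg n)]
    have hsub : (Bad n)ᶜ ⊆ {ω | ∀ k : ℕ, 1 ≤ k → k ≤ d →
        |sval (X n ω * (X n ω)ᵀ) k - (n:ℝ) * sval (smm F) k| ≤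
          2 * d * Real.sqrt ((n:ℝ) * Real.log n)} := by
      intro ω hω
      intro k hk1 hkd
      exact hconc n (le_of_lt hdn) ω hω k hk1 hkd
    calc ENNReal.ofReal (1 - 2 * (d:ℝ)^2 / (n:ℝ)^2)
        = 1 - ENNReal.ofReal (2 * (d:ℝ)^2 / (n:ℝ)^2) := by
          rw [ENNReal.ofReal_sub _ (by positivity), ENNReal.ofReal_one]
      _ ≤ 1 - μ (Bad n) := by
          apply tsub_le_tsub_left _ 1
          have h1 := hBadle n
          rw [hexp n hn0] at h1
          calc μ (Bad n) ≤ ((d*d:ℕ):ENNReal) * (2 * ENNReal.ofReal (1/(n:ℝ)^2)) := h1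
            _ = ENNReal.ofReal (2 * (d:ℝ)^2 / (n:ℝ)^2) := ofReal_combine d n
      _ = μ ((Bad n)ᶜ) := by
          rw [prob_compl_eq_one_sub (hBadmeas n)]
      _ ≤ _ := measure_mono hsub
  -- Borel-Cantelli preparation for bullets 2,3
  all_goals {
    have hBadall : ∀ n : ℕ, μ (Bad n) ≤
        ENNReal.ofReal ((8*(d:ℝ)^2+16) * (1/((n:ℝ)+1)^2)) := by
      intro n
      rcases lt_or_ge n 2 with hn | hn
      · calc μ (Bad n) ≤ 1 := prob_le_one
          _ ≤ ENNReal.ofReal ((8*(d:ℝ)^2+16) * (1/((n:ℝ)+1)^2)) := by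
              rw [← ENNReal.ofReal_one]
              apply ENNReal.ofReal_le_ofReal
              have hn1 : (n:ℝ) ≤ 1 := by exact_mod_cast Nat.lt_succ_iff.1 hn
              have hq : (0:ℝ) < ((n:ℝ)+1)^2 := by positivity
              have heq : (8*(d:ℝ)^2+16) * (1/((n:ℝ)+1)^2) = (8*(d:ℝ)^2+16)/((n:ℝ)+1)^2 := by
                ring
              rw [heq, le_div_iff₀ hq]
              have hn0' : (0:ℝ) ≤ (n:ℝ) := Nat.cast_nonneg n
              nlinarith [sq_nonneg (d:ℝ)]
      · have h1 := hBadle n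
        rw [hexp n (by omega)] at h1
        apply le_trans h1
        rw [ofReal_combine d n]
        apply ENNReal.ofReal_le_ofReal
        have hn2R : (2:ℝ) ≤ (n:ℝ) := by exact_mod_cast hn
        have hq : (0:ℝ) < ((n:ℝ)+1)^2 := by positivity
        have hnq : (0:ℝ) < (n:ℝ)^2 := by nlinarith
        rw [div_le_iff₀ hnq]
        have heq : (8*(d:ℝ)^2+16) * (1/((n:ℝ)+1)^2) * (n:ℝ)^2 =
            ((8*(d:ℝ)^2+16) * (n:ℝ)^2) / ((n:ℝ)+1)^2 := by ring
        rw [heq, le_div_iff₀ hq]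
        nlinarith [sq_nonneg (d:ℝ), sq_nonneg ((n:ℝ) - 1)]
    have hsummable : Summable (fun n : ℕ => (8*(d:ℝ)^2+16) * (1/((n:ℝ)+1)^2)) := by
      apply Summable.mul_left
      have h := (Real.summable_one_div_nat_pow (p := 2)).2 one_lt_two
      have h2 := (summable_nat_add_iff 1).2 h
      have heq : (fun n : ℕ => 1/((n:ℝ)+1)^2) = (fun n : ℕ => 1 / ((n+1:ℕ):ℝ)^2) := by
        funext n
        push_cast
        ring
      rw [heq]
      exact h2
    have hsum_ne : (∑' n, μ (Bad n)) ≠ ⊤ :=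
      ne_top_of_le_ne_top (by
          rw [← ENNReal.ofReal_tsum_of_nonneg (fun n => by positivity) hsummable]
          exact ENNReal.ofReal_ne_top)
        (ENNReal.tsum_le_tsum hBadall)
    obtain ⟨n₁, hn₁2, hana⟩ := ana d lam hlam
    have hAE : ∀ᵐ ω ∂μ, ∃ n₀ : ℕ, ∀ n, n₀ ≤ n → ∀ k : ℕ, 1 ≤ k → k ≤ d →
        1/2 * ((n:ℝ) * sval Δ k) ≤ sval (X n ω * (X n ω)ᵀ) k ∧
        lam/2 * (n:ℝ) ≤ sval (X n ω * (X n ω)ᵀ) k := by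
      filter_upwards [MeasureTheory.ae_finite_setOf_mem hsum_ne] with ω hfin
      obtain ⟨N, hN⟩ := hfin.bddAbove
      refine ⟨max (N+1) (max n₁ (d+1)), ?_⟩
      intro n hn k hk1 hkd
      have hnN : N + 1 ≤ n := le_trans (le_max_left _ _) hn
      have hnn₁ : n₁ ≤ n := le_trans (le_trans (le_max_left _ _) (le_max_right _ _)) hn
      have hnd : d + 1 ≤ n := le_trans (le_trans (le_max_right _ _) (le_max_right _ _)) hn
      have hgood : ω ∉ Bad n := by
        intro hmem
        have : n ≤ N := hN hmem
        omega
      have hc := hconc n (by omega) ω hgood k hk1 hkd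
      have hana' := hana n hnn₁
      have hlamk := hlamle k hk1 hkd
      have habs := abs_le.1 hc
      have hn0R : (0:ℝ) ≤ (n:ℝ) := Nat.cast_nonneg n
      have hval : sval Δ k = sval (smm F) k := by rw [hΔdef]
      rw [← hval] at habs
      have hkey : 1/2 * ((n:ℝ) * sval Δ k) ≤ sval (X n ω * (X n ω)ᵀ) k := by
        have h1 : (n:ℝ) * sval Δ k - 2 * (d:ℝ) * Real.sqrt (n * Real.log n) ≤
            sval (X n ω * (X n ω)ᵀ) k := by linarith [habs.1]
        have h2 : 2 * (d:ℝ) * Real.sqrt (n * Real.log n) ≤ 1/2 * (n:ℝ) * lam := hana'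
        nlinarith [mul_le_mul_of_nonneg_left hlamk hn0R]
      refine ⟨hkey, ?_⟩
      have h3 : lam/2 * (n:ℝ) ≤ 1/2 * ((n:ℝ) * sval Δ k) := by
        nlinarith [mul_le_mul_of_nonneg_left hlamk hn0R]
      linarith
    first
      | (filter_upwards [hAE] with ω hω
         intro k hk1 hkd
         obtain ⟨n₀, h⟩ := hω
         exact ⟨1/2, by norm_num, n₀, fun n hn => (h n hn k hk1 hkd).1⟩)
      | (filter_upwards [hAE] with ω hω
         obtain ⟨n₀, h⟩ := hω
         exact ⟨lam/2, by positivity, n₀, fun n hn k hk1 hkd => (h n hn k hk1 hkd).2⟩)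
  }

end RDPG
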